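/- arXiv:1604.07449 — 4 statements merged into one kernel-verified Lean document; each statement's English description precedes it below -/
import Mathlib

section
/- Let x = (x_ij) be an M×N real matrix such that every row sums to 0 and every entry satisfies x_ij ≤ b₀ for a constant b₀ > 0. Set σ_i² = (1/N)Σ_{j∈[N]} x_ij² and σ² = max_{i∈[M]} σ_i². Fix I ⊂ [M] with |I| = m and 1 ≤ n ≤ N, and let (A_i)_{i∈I} be independent random variables where A_i = Σ_{j∈S_i} x_ij with S_i a uniformly random subset of [N] of size n. Then for every t > 0, P(Σ_{i∈I} A_i ≥ t) ≤ exp(−t²/(2mnσ² + (2/3)b₀t)). -/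
open Finset


lemma amgm_aux (u μ : ℝ) (hu : 0 ≤ u) (hμ : 0 ≤ μ) :
    ∀ k : ℕ, ((k : ℝ) + 1) * (μ * u ^ k) ≤ μ ^ (k + 1) + (k : ℝ) * u ^ (k + 1) := by
  intro k
  induction k with
  | zero => simp
  | succ k ih =>
    have pu : u ^ (k + 1) = u ^ k * u := by ring
    have pμ : μ ^ (k + 1) = μ ^ k * μ := by ring
    have pu2 : u ^ (k + 1 + 1) = u ^ k * u * u := by ring
    have pμ2 : μ ^ (k + 1 + 1) = μ ^ k * μ * μ := by ring
    have key : μ * (u ^ k * u) + μ ^ k * μ * u ≤ μ ^ k * μ * μ + u ^ k * u * u := by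
      rcases le_total u μ with h | h
      · have h2 : u ^ k * u ≤ μ ^ k * μ := by
          rw [← pow_succ, ← pow_succ]; exact pow_le_pow_left₀ hu h (k + 1)
        nlinarith [mul_nonneg (sub_nonneg.2 h) (sub_nonneg.2 h2)]
      · have h2 : μ ^ k * μ ≤ u ^ k * u := by
          rw [← pow_succ, ← pow_succ]; exact pow_le_pow_left₀ hμ h (k + 1)
        nlinarith [mul_nonneg (sub_nonneg.2 h) (sub_nonneg.2 h2)]
    have ih' := mul_le_mul_of_nonneg_right ih hu
    rw [pu, pμ] at ih'
    rw [pu, pμ2, pu2]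
    push_cast
    nlinarith [ih', key]

lemma step_aux (N' k : ℕ) (hN' : 1 ≤ N') (c S : ℝ) (hc : 0 ≤ c) (hS : 0 ≤ S) :
    (N'.choose (k + 1) : ℝ) * (S / N') ^ (k + 1) + c * (N'.choose k : ℝ) * (S / N') ^ k
      ≤ ((N' + 1).choose (k + 1) : ℝ) * ((S + c) / (N' + 1)) ^ (k + 1) := by
  rcases lt_or_ge N' k with hk | hk
  · rw [Nat.choose_eq_zero_of_lt (by omega), Nat.choose_eq_zero_of_lt (by omega)]
    have : (0:ℝ) ≤ ((N' + 1).choose (k + 1) : ℝ) * ((S + c) / (N' + 1)) ^ (k + 1) := by positivity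
    push_cast
    nlinarith
  · set u : ℝ := S / N' with hu_def
    set μ : ℝ := (S + c) / (N' + 1) with hμ_def
    have hN'0 : (0:ℝ) < N' := by exact_mod_cast hN'
    have hu : 0 ≤ u := by positivity
    have hμ : 0 ≤ μ := by positivity
    have hceq : ((N' : ℝ) + 1) * μ = (N' : ℝ) * u + c := by
      rw [hμ_def, hu_def]
      field_simp
    set A : ℝ := (N'.choose (k + 1) : ℝ) with hA
    set B : ℝ := (N'.choose k : ℝ) with hB'
    have h1 : ((k : ℝ) + 1) * A = ((N' : ℝ) - k) * B := by
      have hN := Nat.choose_succ_right_eq N' k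
      have h2 : ((N'.choose (k+1) * (k+1) : ℕ) : ℝ) = ((N'.choose k * (N' - k) : ℕ) : ℝ) := by
        exact_mod_cast congrArg (Nat.cast : ℕ → ℝ) hN
      push_cast [Nat.cast_sub hk] at h2
      rw [hA, hB']
      linarith [h2]
    have hpascal : ((N' + 1).choose (k + 1) : ℝ) = A + B := by
      rw [Nat.choose_succ_succ]
      push_cast
      ring
    have ham := amgm_aux u μ hu hμ k
    have hB : (0:ℝ) ≤ B := by positivity
    have expand : ((k:ℝ) + 1) * (A * u ^ (k+1) + c * B * u ^ k - (A + B) * μ ^ (k+1))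
        = B * ((N':ℝ) + 1) * (((k:ℝ) + 1) * (μ * u ^ k) - (μ ^ (k+1) + (k:ℝ) * u ^ (k+1))) := by
      linear_combination (u ^ (k+1) - μ ^ (k+1)) * h1 - B * ((k:ℝ)+1) * u ^ k * hceq
    have hle : B * ((N':ℝ) + 1) * (((k:ℝ) + 1) * (μ * u ^ k) - (μ ^ (k+1) + (k:ℝ) * u ^ (k+1))) ≤ 0 := by
      have hpos : (0:ℝ) ≤ B * ((N':ℝ)+1) := by positivity
      nlinarith
    rw [hpascal]
    nlinarith [expand, hle]

lemma maclaurin {ι : Type*} [DecidableEq ι] (s : Finset ι) (a : ι → ℝ)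
    (ha : ∀ i ∈ s, 0 ≤ a i) (n : ℕ) :
    ∑ T ∈ s.powersetCard n, ∏ j ∈ T, a j
      ≤ (s.card.choose n : ℝ) * ((∑ j ∈ s, a j) / s.card) ^ n := by
  induction s using Finset.induction_on generalizing n with
  | empty =>
    cases n with
    | zero => simp
    | succ n =>
      rw [Finset.powersetCard_eq_empty.2 (by simp)]
      simp
  | @insert c s hcs ih =>
    have has : ∀ i ∈ s, 0 ≤ a i := fun i hi => ha i (mem_insert_of_mem hi)
    have hac : 0 ≤ a c := ha c (mem_insert_self c s)
    cases n with
    | zero => simp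
    | succ k =>
      rcases s.eq_empty_or_nonempty with rfl | hne
      · cases k with
        | zero =>
          simp [Finset.powersetCard_one, Finset.sum_map]
        | succ k =>
          rw [Finset.powersetCard_eq_empty.2 (by simp)]
          have : ((#(insert c (∅ : Finset ι))).choose (k + 1 + 1) : ℝ) = 0 := by
            simp [Nat.choose_eq_zero_of_lt]
          rw [this]
          simp
      · have hN' : 1 ≤ s.card := Finset.card_pos.2 hne
        have hS : 0 ≤ ∑ j ∈ s, a j := Finset.sum_nonneg has
        rw [Finset.powersetCard_succ_insert hcs k]
        have hdisj : Disjoint (s.powersetCard (k+1)) ((s.powersetCard k).image (insert c)) := by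
          rw [Finset.disjoint_left]
          intro T hT hT'
          obtain ⟨T', hT', rfl⟩ := Finset.mem_image.1 hT'
          exact hcs ((Finset.mem_powersetCard.1 hT).1 (mem_insert_self c T'))
        rw [Finset.sum_union hdisj]
        have himg : ∑ T ∈ (s.powersetCard k).image (insert c), ∏ j ∈ T, a j
            = a c * ∑ T ∈ s.powersetCard k, ∏ j ∈ T, a j := by
          rw [Finset.sum_image, Finset.mul_sum]
          · apply Finset.sum_congr rfl
            intro T hT
            have hcT : c ∉ T := fun hc => hcs ((Finset.mem_powersetCard.1 hT).1 hc)
            rw [Finset.prod_insert hcT]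
          · intro T1 h1 T2 h2 heq
            have hc1 : c ∉ T1 := fun hc => hcs ((Finset.mem_powersetCard.1 h1).1 hc)
            have hc2 : c ∉ T2 := fun hc => hcs ((Finset.mem_powersetCard.1 h2).1 hc)
            have := congrArg (fun T => Finset.erase T c) heq
            simpa [Finset.erase_insert hc1, Finset.erase_insert hc2] using this
        rw [himg]
        have step := step_aux s.card k hN' (a c) (∑ j ∈ s, a j) hac hS
        have hcard : #(insert c s) = s.card + 1 := Finset.card_insert_of_notMem hcs
        have hsum : ∑ j ∈ insert c s, a j = ∑ j ∈ s, a j + a c := by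
          rw [Finset.sum_insert hcs]; ring
        rw [hcard, hsum]
        have ih1 := ih has (k+1)
        have ih2 := ih has k
        have h2' : a c * ∑ T ∈ s.powersetCard k, ∏ j ∈ T, a j
            ≤ a c * ((s.card.choose k : ℝ) * ((∑ j ∈ s, a j) / s.card) ^ k) :=
          mul_le_mul_of_nonneg_left ih2 hac
        push_cast
        push_cast at step
        nlinarith [ih1, h2', step]


lemma exp_quad_neg {y : ℝ} (hy : y ≤ 0) : Real.exp y ≤ 1 + y + y ^ 2 / 2 := by
  have hanti : AntitoneOn (fun z : ℝ => 1 + z + z ^ 2 / 2 - Real.exp z) (Set.Iic 0) := by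
    apply antitoneOn_of_deriv_nonpos (convex_Iic 0)
    · fun_prop
    · fun_prop
    · intro z hz
      rw [interior_Iic] at hz
      have hd : HasDerivAt (fun z : ℝ => 1 + z + z ^ 2 / 2 - Real.exp z)
          (1 + z - Real.exp z) z := by
        have h1 : HasDerivAt (fun z : ℝ => 1 + z + z ^ 2 / 2) (1 + z) z := by
          have := ((hasDerivAt_id' (x := z)).const_add 1).add (((hasDerivAt_pow 2 z)).div_const 2)
          exact this.congr_deriv (by ring)
        have := h1.sub (Real.hasDerivAt_exp z)
        exact this
      rw [hd.deriv]
      nlinarith [Real.add_one_le_exp z]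
  have h := hanti (Set.mem_Iic.2 hy) (Set.mem_Iic.2 le_rfl) hy
  simp only [Real.exp_zero] at h
  nlinarith [h]

lemma one_add_sub_exp_nonneg {y : ℝ} (hy : 0 ≤ y) : 0 ≤ 1 + (y - 1) * Real.exp y := by
  have hmono : MonotoneOn (fun z : ℝ => 1 + (z - 1) * Real.exp z) (Set.Ici 0) := by
    apply monotoneOn_of_deriv_nonneg (convex_Ici 0)
    · fun_prop
    · fun_prop
    · intro z hz
      rw [interior_Ici] at hz
      have hd : HasDerivAt (fun z : ℝ => 1 + (z - 1) * Real.exp z) (z * Real.exp z) z := by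
        have := (((hasDerivAt_id' (x := z)).sub_const 1).mul (Real.hasDerivAt_exp z)).const_add 1
        exact this.congr_deriv (by ring)
      rw [hd.deriv]
      exact mul_nonneg (le_of_lt hz) (Real.exp_pos z).le
  have h := hmono (Set.mem_Ici.2 le_rfl) (Set.mem_Ici.2 hy) hy
  simpa using h

lemma F1_nonneg {y : ℝ} (hy : 0 ≤ y) :
    0 ≤ y + (1/3) * (Real.exp y - 1 - y) - (1 - y/3) * (Real.exp y - 1) := by
  have hmono : MonotoneOn
      (fun z : ℝ => z + (1/3) * (Real.exp z - 1 - z) - (1 - z/3) * (Real.exp z - 1))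
      (Set.Ici 0) := by
    apply monotoneOn_of_deriv_nonneg (convex_Ici 0)
    · fun_prop
    · fun_prop
    · intro z hz
      rw [interior_Ici] at hz
      have hd : HasDerivAt
          (fun z : ℝ => z + (1/3) * (Real.exp z - 1 - z) - (1 - z/3) * (Real.exp z - 1))
          ((1 + (z - 1) * Real.exp z) / 3) z := by
        have h1 : HasDerivAt (fun z : ℝ => z + (1/3) * (Real.exp z - 1 - z))
            (1 + (1/3) * (Real.exp z - 1)) z := by
          have := (hasDerivAt_id' (x := z)).add
            ((((Real.hasDerivAt_exp z).sub_const 1).sub (hasDerivAt_id' (x := z))).const_mul (1/3:ℝ))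
          exact this.congr_deriv (by ring)
        have h2 : HasDerivAt (fun z : ℝ => (1 - z/3) * (Real.exp z - 1))
            ((-1/3) * (Real.exp z - 1) + (1 - z/3) * Real.exp z) z := by
          have ha : HasDerivAt (fun z : ℝ => 1 - z/3) (-1/3 : ℝ) z := by
            have := ((hasDerivAt_id' (x := z)).div_const 3).const_sub 1
            exact this.congr_deriv (by ring)
          have := ha.mul ((Real.hasDerivAt_exp z).sub_const 1)
          exact this
        have := h1.sub h2
        exact this.congr_deriv (by ring)
      rw [hd.deriv]
      have := one_add_sub_exp_nonneg (le_of_lt hz)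
      linarith
  have h := hmono (Set.mem_Ici.2 le_rfl) (Set.mem_Ici.2 hy) hy
  simp only [Real.exp_zero] at h
  linarith [h]

lemma bernstein_kernel {y : ℝ} (hy : 0 ≤ y) :
    (1 - y/3) * (Real.exp y - 1 - y) ≤ y ^ 2 / 2 := by
  have hmono : MonotoneOn
      (fun z : ℝ => z ^ 2 / 2 - (1 - z/3) * (Real.exp z - 1 - z)) (Set.Ici 0) := by
    apply monotoneOn_of_deriv_nonneg (convex_Ici 0)
    · fun_prop
    · fun_prop
    · intro z hz
      rw [interior_Ici] at hz
      have hd : HasDerivAt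
          (fun z : ℝ => z ^ 2 / 2 - (1 - z/3) * (Real.exp z - 1 - z))
          (z + (1/3) * (Real.exp z - 1 - z) - (1 - z/3) * (Real.exp z - 1)) z := by
        have h1 : HasDerivAt (fun z : ℝ => z ^ 2 / 2) z z := by
          have := (hasDerivAt_pow 2 z).div_const 2
          exact this.congr_deriv (by ring)
        have ha : HasDerivAt (fun z : ℝ => 1 - z/3) (-1/3 : ℝ) z := by
          have := ((hasDerivAt_id' (x := z)).div_const 3).const_sub 1
          exact this.congr_deriv (by ring)
        have hb : HasDerivAt (fun z : ℝ => Real.exp z - 1 - z) (Real.exp z - 1) z := by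
          have := ((Real.hasDerivAt_exp z).sub_const 1).sub (hasDerivAt_id' (x := z))
          exact this.congr_deriv (by ring)
        have h2 := ha.mul hb
        have := h1.sub h2
        exact this.congr_deriv (by ring)
      rw [hd.deriv]
      exact F1_nonneg (le_of_lt hz)
  have h := hmono (Set.mem_Ici.2 le_rfl) (Set.mem_Ici.2 hy) hy
  simp only [Real.exp_zero] at h
  nlinarith [h]

/-- ψ(y) = e^y - 1 - y ≤ y² / (2(1 - c/3)) for all y ≤ c where 0 < c < 3. -/
lemma psi_bound {c : ℝ} (hc0 : 0 < c) (hc3 : c < 3) {y : ℝ} (hy : y ≤ c) :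
    Real.exp y - 1 - y ≤ y ^ 2 / (2 * (1 - c/3)) := by
  have hden : 0 < 2 * (1 - c/3) := by nlinarith
  rcases le_total y 0 with h | h
  · have h1 := exp_quad_neg h
    have h2 : y ^ 2 / 2 ≤ y ^ 2 / (2 * (1 - c/3)) := by
      apply div_le_div_of_nonneg_left (by positivity) hden
      nlinarith
    nlinarith
  · have hy3 : y < 3 := lt_of_le_of_lt hy hc3
    have h1 := bernstein_kernel h
    have hy3' : 0 < 1 - y/3 := by nlinarith
    have h2 : Real.exp y - 1 - y ≤ y ^ 2 / (2 * (1 - y/3)) := by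
      rw [le_div_iff₀ (by nlinarith)]
      nlinarith [h1]
    have h3 : y ^ 2 / (2 * (1 - y/3)) ≤ y ^ 2 / (2 * (1 - c/3)) := by
      apply div_le_div_of_nonneg_left (by positivity) hden
      nlinarith
    linarith
lemma exponent_helper (q b0 t : ℝ) (hq : 0 < q) (hb0 : 0 < b0) (ht : 0 < t) :
    -(t / (q + b0 * t / 3) * t) + q * ((t / (q + b0 * t / 3)) ^ 2 / (2 * q / (q + b0 * t / 3)))
      = -(t ^ 2) / (2 * q + 2 / 3 * b0 * t) := by
  have hD : 0 < q + b0 * t / 3 := by positivity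
  have h2 : (0:ℝ) < 2 * q + 2 / 3 * b0 * t := by positivity
  field_simp
  ring


/-- Bernstein-type tail bound for sums of independent without-replacement row samples.
For each row `i`, `S_i` is a uniformly random size-`n` subset of `[N]`, independently
across rows; the probability that `∑_{i ∈ I} ∑_{j ∈ S_i} x i j ≥ t` is expressed by
counting the tuples `(S_i)_i` (encoded as functions `f` with all `(f i).card = n`,
uniform among `C(N,n)^M` possibilities). -/
theorem bernstein_without_replacement (M N m n : ℕ) (hM : 0 < M)
    (hn : 1 ≤ n) (hnN : n ≤ N)
    (x : Fin M → Fin N → ℝ) (b0 : ℝ) (hb0 : 0 < b0)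
    (hrow : ∀ i, ∑ j, x i j = 0) (hbd : ∀ i j, x i j ≤ b0)
    (I : Finset (Fin M)) (hI : I.card = m) (t : ℝ) (ht : 0 < t) :
    ({f : Fin M → Finset (Fin N) |
        (∀ i, (f i).card = n) ∧ t ≤ ∑ i ∈ I, ∑ j ∈ f i, x i j}.ncard : ℝ) /
        ((Nat.choose N n : ℝ) ^ M)
      ≤ Real.exp (-(t ^ 2) /
          (2 * (m : ℝ) * (n : ℝ) * (⨆ i : Fin M, (∑ j, x i j ^ 2) / (N : ℝ))
            + (2 / 3) * b0 * t)) := by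
  classical
  set σ2 : ℝ := ⨆ i : Fin M, (∑ j, x i j ^ 2) / (N : ℝ) with hσ2def
  have hN : 0 < N := lt_of_lt_of_le hn hnN
  have hNR : (0:ℝ) < N := by exact_mod_cast hN
  have hC : (0:ℝ) < (N.choose n : ℝ) := by exact_mod_cast Nat.choose_pos hnN
  have hCM : (0:ℝ) < (N.choose n : ℝ) ^ M := by positivity
  have hbdd : BddAbove (Set.range (fun i : Fin M => (∑ j, x i j ^ 2) / (N:ℝ))) :=
    Set.Finite.bddAbove (Set.finite_range _)
  have hσi : ∀ i, (∑ j, x i j ^ 2) / (N:ℝ) ≤ σ2 := fun i => le_ciSup hbdd i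
  have hσ2nonneg : 0 ≤ σ2 := le_trans (by positivity) (hσi ⟨0, hM⟩)
  set E : Finset (Fin M → Finset (Fin N)) :=
    Finset.univ.filter (fun f : Fin M → Finset (Fin N) =>
      (∀ i, (f i).card = n) ∧ t ≤ ∑ i ∈ I, ∑ j ∈ f i, x i j) with hEdef
  have hncard : ({f : Fin M → Finset (Fin N) |
      (∀ i, (f i).card = n) ∧ t ≤ ∑ i ∈ I, ∑ j ∈ f i, x i j}.ncard : ℝ) = (E.card : ℝ) := by
    rw [hEdef, Set.ncard_eq_toFinset_card', Set.toFinset_setOf]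
  rw [hncard]
  rcases Nat.eq_zero_or_pos m with rfl | hm
  · have hIe : I = ∅ := Finset.card_eq_zero.1 hI
    have hE : E = ∅ := by
      rw [hEdef, Finset.filter_eq_empty_iff]
      rintro f - ⟨-, hle⟩
      rw [hIe, Finset.sum_empty] at hle
      linarith
    rw [hE]
    simp only [Finset.card_empty, Nat.cast_zero, zero_div]
    positivity
  rcases le_or_gt σ2 0 with hσ0 | hσpos
  · have hx0 : ∀ i j, x i j = 0 := by
      intro i j
      have h1 : ∑ j', x i j' ^ 2 ≤ 0 := by
        have h1' : ∑ j', x i j' ^ 2 ≤ σ2 * N := (div_le_iff₀ hNR).1 (hσi i)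
        nlinarith [mul_nonpos_of_nonpos_of_nonneg hσ0 hNR.le]
      have h2 : ∑ j', x i j' ^ 2 = 0 :=
        le_antisymm h1 (Finset.sum_nonneg fun j' _ => sq_nonneg _)
      have h3 := (Finset.sum_eq_zero_iff_of_nonneg (fun j' _ => sq_nonneg (x i j'))).1 h2
      have := h3 j (Finset.mem_univ j)
      exact pow_eq_zero_iff (by norm_num) |>.1 this
    have hE : E = ∅ := by
      rw [hEdef, Finset.filter_eq_empty_iff]
      rintro f - ⟨-, hle⟩
      have : ∑ i ∈ I, ∑ j ∈ f i, x i j = 0 :=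
        Finset.sum_eq_zero fun i _ => Finset.sum_eq_zero fun j _ => hx0 i j
      rw [this] at hle
      linarith
    rw [hE]
    simp only [Finset.card_empty, Nat.cast_zero, zero_div]
    positivity
  -- main case
  have hmR : (1:ℝ) ≤ m := by exact_mod_cast hm
  have hnR : (1:ℝ) ≤ n := by exact_mod_cast hn
  have hP : (0:ℝ) < (m:ℝ) * (n:ℝ) * σ2 := by positivity
  set D : ℝ := (m:ℝ) * (n:ℝ) * σ2 + b0 * t / 3 with hDdef
  have hD : 0 < D := by rw [hDdef]; positivity
  set lam : ℝ := t / D with hlamdef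
  have hlam : 0 < lam := by rw [hlamdef]; positivity
  set c : ℝ := lam * b0 with hcdef
  have hc0 : 0 < c := by rw [hcdef]; positivity
  have hc3 : c < 3 := by
    rw [hcdef, hlamdef]
    rw [div_mul_eq_mul_div, div_lt_iff₀ hD, hDdef]
    nlinarith [hP]
  set Kden : ℝ := 2 * (1 - c / 3) with hKdendef
  have hKden : 0 < Kden := by rw [hKdendef]; nlinarith
  have hKdenval : Kden = 2 * ((m:ℝ) * (n:ℝ) * σ2) / D := by
    rw [hKdendef, hcdef, hlamdef]
    field_simp
    rw [hDdef]
    ring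
  set w : ℝ := lam ^ 2 * σ2 / Kden with hwdef
  have hw : 0 ≤ w := by rw [hwdef]; positivity
  set B : ℝ := Real.exp ((n:ℝ) * w) with hBdef
  -- row bound
  have row_bound : ∀ i : Fin M,
      ∑ s ∈ Finset.powersetCard n (Finset.univ : Finset (Fin N)),
        ∏ j ∈ s, Real.exp (lam * x i j) ≤ (N.choose n : ℝ) * B := by
    intro i
    have hmac := maclaurin (Finset.univ : Finset (Fin N)) (fun j => Real.exp (lam * x i j))
      (fun j _ => (Real.exp_pos _).le) n
    rw [Finset.card_univ, Fintype.card_fin] at hmac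
    refine le_trans hmac ?_
    have hmean0 : (0:ℝ) ≤ (∑ j, Real.exp (lam * x i j)) / N :=
      div_nonneg (Finset.sum_nonneg fun j _ => (Real.exp_pos _).le) hNR.le
    have hmean : (∑ j, Real.exp (lam * x i j)) / N ≤ 1 + w := by
      have hterm : ∀ j, Real.exp (lam * x i j) ≤ 1 + lam * x i j + (lam * x i j) ^ 2 / Kden := by
        intro j
        have hy : lam * x i j ≤ c := by
          rw [hcdef]; exact mul_le_mul_of_nonneg_left (hbd i j) hlam.le
        have := psi_bound hc0 hc3 hy
        rw [← hKdendef] at this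
        linarith
      have hsum : ∑ j, Real.exp (lam * x i j)
          ≤ (N:ℝ) + lam ^ 2 / Kden * (∑ j, x i j ^ 2) := by
        calc ∑ j, Real.exp (lam * x i j)
            ≤ ∑ j, (1 + lam * x i j + (lam * x i j) ^ 2 / Kden) :=
              Finset.sum_le_sum fun j _ => hterm j
          _ = (N:ℝ) + lam * (∑ j, x i j) + lam ^ 2 / Kden * (∑ j, x i j ^ 2) := by
              rw [Finset.sum_add_distrib, Finset.sum_add_distrib, ← Finset.mul_sum]
              simp only [Finset.sum_const, Finset.card_univ, Fintype.card_fin, nsmul_eq_mul,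
                mul_one]
              congr 1
              rw [Finset.mul_sum]
              apply Finset.sum_congr rfl
              intro j _
              ring
          _ = (N:ℝ) + lam ^ 2 / Kden * (∑ j, x i j ^ 2) := by rw [hrow i]; ring
      have hx2 : ∑ j, x i j ^ 2 ≤ (N:ℝ) * σ2 := by
        have := hσi i
        rw [div_le_iff₀ hNR] at this
        linarith [this]
      have : ∑ j, Real.exp (lam * x i j) ≤ (N:ℝ) * (1 + w) := by
        have h4 : lam ^ 2 / Kden * (∑ j, x i j ^ 2) ≤ lam ^ 2 / Kden * ((N:ℝ) * σ2) :=
          mul_le_mul_of_nonneg_left hx2 (by positivity)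
        rw [hwdef]
        calc ∑ j, Real.exp (lam * x i j) ≤ (N:ℝ) + lam ^ 2 / Kden * ((N:ℝ) * σ2) := by
              linarith
          _ = (N:ℝ) * (1 + lam ^ 2 * σ2 / Kden) := by field_simp
      rw [div_le_iff₀ hNR]
      linarith [this]
    calc (N.choose n : ℝ) * ((∑ j, Real.exp (lam * x i j)) / N) ^ n
        ≤ (N.choose n : ℝ) * (1 + w) ^ n := by
          apply mul_le_mul_of_nonneg_left _ hC.le
          exact pow_le_pow_left₀ hmean0 hmean n
      _ ≤ (N.choose n : ℝ) * Real.exp w ^ n := by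
          apply mul_le_mul_of_nonneg_left _ hC.le
          apply pow_le_pow_left₀ (by positivity)
          linarith [Real.add_one_le_exp w]
      _ = (N.choose n : ℝ) * B := by rw [hBdef, Real.exp_nat_mul]
  -- counting
  set g : Fin M → Finset (Fin N) → ℝ :=
    fun i s => if i ∈ I then Real.exp (lam * ∑ j ∈ s, x i j) else 1 with hgdef
  set Φ : Finset (Fin M → Finset (Fin N)) :=
    Fintype.piFinset (fun _ : Fin M => Finset.powersetCard n (Finset.univ : Finset (Fin N)))
    with hΦdef
  have hEΦ : E ⊆ Φ := by
    intro f hf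
    rw [hEdef, Finset.mem_filter] at hf
    rw [hΦdef, Fintype.mem_piFinset]
    intro i
    exact Finset.mem_powersetCard_univ.2 (hf.2.1 i)
  have hprodf : ∀ f : Fin M → Finset (Fin N),
      Real.exp (lam * ((∑ i ∈ I, ∑ j ∈ f i, x i j) - t))
        = Real.exp (-(lam * t)) * ∏ i, g i (f i) := by
    intro f
    have h1 : ∏ i, g i (f i) = ∏ i ∈ I, Real.exp (lam * ∑ j ∈ f i, x i j) := by
      rw [hgdef]
      rw [Finset.prod_ite_mem Finset.univ I (fun i => Real.exp (lam * ∑ j ∈ f i, x i j)),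
        Finset.univ_inter]
    rw [h1, ← Real.exp_sum, ← Real.exp_add]
    congr 1
    rw [← Finset.mul_sum]
    ring
  have hcount : (E.card : ℝ) ≤ Real.exp (-(lam * t)) *
      ((N.choose n : ℝ) ^ M * B ^ m) := by
    have h1 : (E.card : ℝ) ≤ ∑ f ∈ E, Real.exp (lam * ((∑ i ∈ I, ∑ j ∈ f i, x i j) - t)) := by
      rw [Finset.card_eq_sum_ones]
      push_cast
      apply Finset.sum_le_sum
      intro f hf
      rw [hEdef, Finset.mem_filter] at hf
      apply Real.one_le_exp
      exact mul_nonneg hlam.le (by linarith [hf.2.2])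
    have h2 : ∑ f ∈ E, Real.exp (lam * ((∑ i ∈ I, ∑ j ∈ f i, x i j) - t))
        ≤ ∑ f ∈ Φ, Real.exp (lam * ((∑ i ∈ I, ∑ j ∈ f i, x i j) - t)) :=
      Finset.sum_le_sum_of_subset_of_nonneg hEΦ fun f _ _ => (Real.exp_pos _).le
    have h3 : ∑ f ∈ Φ, Real.exp (lam * ((∑ i ∈ I, ∑ j ∈ f i, x i j) - t))
        = Real.exp (-(lam * t)) *
          ∏ i, ∑ s ∈ Finset.powersetCard n (Finset.univ : Finset (Fin N)), g i s := by
      rw [Finset.sum_congr rfl fun f _ => hprodf f, ← Finset.mul_sum, hΦdef,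
        ← Finset.prod_univ_sum]
    have h4 : ∏ i, ∑ s ∈ Finset.powersetCard n (Finset.univ : Finset (Fin N)), g i s
        ≤ (N.choose n : ℝ) ^ M * B ^ m := by
      have hfac : ∀ i : Fin M, ∑ s ∈ Finset.powersetCard n (Finset.univ : Finset (Fin N)), g i s
          ≤ (N.choose n : ℝ) * (if i ∈ I then B else 1) := by
        intro i
        rw [hgdef]
        by_cases hi : i ∈ I
        · simp only [hi, if_true]
          have : ∀ s ∈ Finset.powersetCard n (Finset.univ : Finset (Fin N)),
              Real.exp (lam * ∑ j ∈ s, x i j) = ∏ j ∈ s, Real.exp (lam * x i j) := by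
            intro s _
            rw [Finset.mul_sum, Real.exp_sum]
          rw [Finset.sum_congr rfl this]
          exact row_bound i
        · simp only [hi, if_false]
          rw [Finset.sum_const, Finset.card_powersetCard, Finset.card_univ, Fintype.card_fin]
          simp
      calc ∏ i, ∑ s ∈ Finset.powersetCard n (Finset.univ : Finset (Fin N)), g i s
          ≤ ∏ i, (N.choose n : ℝ) * (if i ∈ I then B else 1) := by
            apply Finset.prod_le_prod
            · intro i _
              apply Finset.sum_nonneg
              intro s _
              rw [hgdef]
              dsimp only
              split_ifs
              · exact (Real.exp_pos _).le
              · norm_num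
            · exact fun i _ => hfac i
        _ = (N.choose n : ℝ) ^ M * B ^ m := by
            rw [Finset.prod_mul_distrib, Finset.prod_const, Finset.card_univ, Fintype.card_fin,
              Finset.prod_ite_mem Finset.univ I (fun _ => B), Finset.univ_inter,
              Finset.prod_const, hI]
    calc (E.card : ℝ) ≤ ∑ f ∈ Φ, Real.exp (lam * ((∑ i ∈ I, ∑ j ∈ f i, x i j) - t)) :=
          le_trans h1 h2
      _ = Real.exp (-(lam * t)) *
          ∏ i, ∑ s ∈ Finset.powersetCard n (Finset.univ : Finset (Fin N)), g i s := h3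
      _ ≤ Real.exp (-(lam * t)) * ((N.choose n : ℝ) ^ M * B ^ m) := by
          apply mul_le_mul_of_nonneg_left h4 (Real.exp_pos _).le
  -- final algebra
  have harith : -(lam * t) + (m:ℝ) * ((n:ℝ) * w)
      = -(t ^ 2) / (2 * (m:ℝ) * (n:ℝ) * σ2 + 2 / 3 * b0 * t) := by
    have h0 : (m:ℝ) * ((n:ℝ) * w)
        = ((m:ℝ) * (n:ℝ) * σ2) * (lam ^ 2 / (2 * ((m:ℝ) * (n:ℝ) * σ2) / D)) := by
      rw [hwdef, hKdenval]; ring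
    rw [h0, hlamdef, hDdef]
    linear_combination exponent_helper ((m:ℝ) * (n:ℝ) * σ2) b0 t hP hb0 ht
  have hfinal : Real.exp (-(lam * t)) * B ^ m
      = Real.exp (-(t ^ 2) / (2 * (m:ℝ) * (n:ℝ) * σ2 + 2 / 3 * b0 * t)) := by
    rw [hBdef, ← Real.exp_nat_mul, ← Real.exp_add]
    exact congrArg Real.exp harith
  rw [div_le_iff₀ hCM]
  calc (E.card : ℝ) ≤ Real.exp (-(lam * t)) * ((N.choose n : ℝ) ^ M * B ^ m) := hcount
    _ = (Real.exp (-(lam * t)) * B ^ m) * (N.choose n : ℝ) ^ M := by ring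
    _ = Real.exp (-(t ^ 2) / (2 * (m:ℝ) * (n:ℝ) * σ2 + 2 / 3 * b0 * t)) *
        (N.choose n : ℝ) ^ M := by rw [hfinal]
end

section
/- Let x = (x_ij) be an M×N real matrix such that every row sums to 0 and every entry satisfies x_ij ≤ b₀ for a constant b₀ > 0. Fix 1 ≤ m ≤ M and 1 ≤ n ≤ N. Let ζ = scan(x) be the (m,n)-scan statistic of x and let σ² = max_{i∈[M]} (1/N)Σ_{j∈[N]} x_ij². If ζ > 0, then the unidimensional permutation p-value satisfies 𝔓(x) ≤ C(M,m)·C(N,n)·exp(−ζ²/(2mnσ² + (2/3)b₀ζ)), where C(K,k) denotes the binomial coefficient. -/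
open Finset Set

noncomputable section

/-- The `(m,n)`-scan statistic of an `M × N` real matrix. -/
def scan (M N m n : ℕ) (x : Fin M → Fin N → ℝ) : ℝ :=
  sSup {s : ℝ | ∃ I : Finset (Fin M), ∃ J : Finset (Fin N),
    I.card = m ∧ J.card = n ∧ s = ∑ i ∈ I, ∑ j ∈ J, x i j}

/-- `Π₁`: permutations of `[M] × [N]` that fix the row index (permute within rows). -/
def Pi1 (M N : ℕ) : Set (Equiv.Perm (Fin M × Fin N)) := {π | ∀ p, (π p).1 = p.1}

/-- The matrix `x` permuted by `π`, i.e. `(x_π)_{ij} = x_{π(i,j)}`. -/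
def permute {M N : ℕ} (π : Equiv.Perm (Fin M × Fin N)) (x : Fin M → Fin N → ℝ) :
    Fin M → Fin N → ℝ := fun i j => x (π (i, j)).1 (π (i, j)).2

/-- The permutation p-value of the `(m,n)`-scan statistic, calibrated over `G`. -/
def permPval (M N m n : ℕ) (G : Set (Equiv.Perm (Fin M × Fin N)))
    (x : Fin M → Fin N → ℝ) : ℝ :=
  ({π ∈ G | scan M N m n x ≤ scan M N m n (permute π x)}.ncard : ℝ) / (G.ncard : ℝ)


section Aux
variable {M N : ℕ}

/-- `e^u ≤ 1 + u + u²/2` for `u ≤ 0`. -/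
lemma exp_le_neg (u : ℝ) (hu : u ≤ 0) : Real.exp u ≤ 1 + u + u ^ 2 / 2 := by
  have key : ∀ t : ℝ, 0 ≤ t → Real.exp (-t) ≤ 1 - t + t ^ 2 / 2 := by
    intro t ht
    have h1 : ∀ s ∈ Set.Icc (0:ℝ) t, HasDerivAt (fun s => 1 - s + s ^ 2 / 2 - Real.exp (-s))
        (-1 + s + Real.exp (-s)) s := by
      intro s _
      have : HasDerivAt (fun s : ℝ => Real.exp (-s)) (-Real.exp (-s)) s := by
        simpa [Function.comp_def] using (Real.hasDerivAt_exp (-s)).comp s (hasDerivAt_neg s)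
      have h2 : HasDerivAt (fun s : ℝ => 1 - s + s ^ 2 / 2) (-1 + s) s := by
        have := ((hasDerivAt_pow 2 s).div_const 2)
        have h3 := ((hasDerivAt_const s (1:ℝ)).sub (hasDerivAt_id s)).add this
        exact h3.congr_deriv (by norm_num)
      exact (h2.sub this).congr_deriv (by ring)
    have mono : MonotoneOn (fun s => 1 - s + s ^ 2 / 2 - Real.exp (-s)) (Set.Icc 0 t) := by
      apply monotoneOn_of_deriv_nonneg (convex_Icc 0 t)
      · exact (Continuous.sub (by continuity) (by continuity)).continuousOn
      · intro s hs
        rw [interior_Icc] at hs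
        exact (h1 s (Set.mem_Icc_of_Ioo hs)).differentiableAt.differentiableWithinAt
      · intro s hs
        rw [interior_Icc] at hs
        rw [(h1 s (Set.mem_Icc_of_Ioo hs)).deriv]
        nlinarith [Real.add_one_le_exp (-s), hs.1]
    have := mono (Set.left_mem_Icc.2 ht) (Set.right_mem_Icc.2 ht) ht
    simp at this
    linarith
  have := key (-u) (by linarith)
  simpa using this

/-- Key pointwise bound: for `u ≤ c`, `0 < c < 3`, `e^u ≤ 1 + u + u² / (2(1 - c/3))`. -/
lemma exp_pointwise (u c : ℝ) (hc0 : 0 < c) (hc3 : c < 3) (huc : u ≤ c) :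
    Real.exp u ≤ 1 + u + u ^ 2 / (2 * (1 - c / 3)) := by
  have hc1 : 0 < 1 - c / 3 := by linarith
  have hhalf : u ^ 2 / 2 ≤ u ^ 2 / (2 * (1 - c / 3)) := by
    apply div_le_div_of_nonneg_left (sq_nonneg u) (by linarith)
    nlinarith
  rcases le_or_gt u 0 with hu | hu
  · linarith [exp_le_neg u hu]
  -- now 0 < u ≤ c
  have hu3 : u / 3 < 1 := by linarith
  have hu0 : (0:ℝ) ≤ u := hu.le
  -- series bound
  have hsum : Summable (fun k : ℕ => u ^ k / (k.factorial : ℝ)) := Real.summable_pow_div_factorial u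
  have hexp : Real.exp u = ∑' k : ℕ, u ^ k / (k.factorial : ℝ) := by
    rw [Real.exp_eq_exp_ℝ, NormedSpace.exp_eq_tsum (𝕂 := ℝ)]
    simp [div_eq_inv_mul, smul_eq_mul]
  have hgeom : Summable (fun k : ℕ => u ^ 2 / 2 * (u / 3) ^ k) :=
    (summable_geometric_of_lt_one (by positivity) hu3).mul_left _
  have hterm : ∀ k : ℕ, u ^ (k + 2) / ((k + 2).factorial : ℝ) ≤ u ^ 2 / 2 * (u / 3) ^ k := by
    intro k
    have hfac : (2 * 3 ^ k : ℝ) ≤ ((k + 2).factorial : ℝ) := by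
      induction k with
      | zero => norm_num
      | succ k ih =>
        have : ((k + 3).factorial : ℝ) = (k + 3) * ((k + 2).factorial : ℝ) := by
          push_cast [Nat.factorial_succ]; ring_nf
        rw [show k + 1 + 2 = k + 3 from rfl, this]
        have h3 : (3 : ℝ) ≤ ((k:ℝ) + 3) := by
          have := Nat.cast_nonneg (α := ℝ) k; linarith
        have h4 : (0:ℝ) < ((k+2).factorial : ℝ) := by positivity
        calc (2 * 3 ^ (k+1) : ℝ) = 3 * (2 * 3 ^ k) := by ring
          _ ≤ 3 * ((k + 2).factorial : ℝ) := by linarith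
          _ ≤ ((k:ℝ) + 3) * ((k + 2).factorial : ℝ) := mul_le_mul_of_nonneg_right h3 h4.le
    rw [div_le_iff₀ (by positivity)]
    have : u ^ (k + 2) = u ^ 2 * u ^ k := by ring
    rw [this]
    have h1 : u ^ 2 / 2 * (u / 3) ^ k * (2 * 3 ^ k) = u ^ 2 * u ^ k := by
      rw [div_pow]; field_simp
    calc u ^ 2 * u ^ k = u ^ 2 / 2 * (u / 3) ^ k * (2 * 3 ^ k) := by rw [h1]
      _ ≤ u ^ 2 / 2 * (u / 3) ^ k * ((k + 2).factorial : ℝ) := by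
          apply mul_le_mul_of_nonneg_left hfac; positivity
  have htail : ∑' k : ℕ, u ^ (k + 2) / ((k + 2).factorial : ℝ) ≤ u ^ 2 / 2 * (1 - u / 3)⁻¹ := by
    calc ∑' k : ℕ, u ^ (k + 2) / ((k + 2).factorial : ℝ)
        ≤ ∑' k : ℕ, u ^ 2 / 2 * (u / 3) ^ k := by
          apply Summable.tsum_le_tsum hterm _ hgeom
          exact (summable_nat_add_iff 2).2 hsum
      _ = u ^ 2 / 2 * (1 - u / 3)⁻¹ := by
          rw [tsum_mul_left, tsum_geometric_of_lt_one (by positivity) hu3]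
  have hsplit : Real.exp u = 1 + u + ∑' k : ℕ, u ^ (k + 2) / ((k + 2).factorial : ℝ) := by
    rw [hexp, hsum.tsum_eq_zero_add, ((summable_nat_add_iff 1).2 hsum).tsum_eq_zero_add]
    simp [Nat.factorial]
    ring
  have hfinal : u ^ 2 / 2 * (1 - u / 3)⁻¹ ≤ u ^ 2 / (2 * (1 - c / 3)) := by
    rw [div_mul_eq_div_div, div_eq_mul_inv (u ^ 2 / 2)]
    apply mul_le_mul_of_nonneg_left _ (by positivity)
    apply inv_anti₀ hc1
    linarith
  rw [hsplit]
  linarith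

/-- Key step: adding one more fresh coordinate to the product. -/
lemma key_step (z : Fin N → ℝ) (hz : ∀ j, 0 ≤ z j) (J : Finset (Fin N))
    (a : Fin N) (ha : a ∉ J) :
    (N : ℝ) * ∑ σ : Equiv.Perm (Fin N), (∏ j ∈ J, z (σ j)) * z (σ a)
      ≤ (∑ j, z j) * ∑ σ : Equiv.Perm (Fin N), ∏ j ∈ J, z (σ j) := by
  have hswap : ∀ (l : Fin N) (f : Equiv.Perm (Fin N) → ℝ),
      ∑ σ : Equiv.Perm (Fin N), f σ = ∑ σ : Equiv.Perm (Fin N), f (σ * Equiv.swap l a) := by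
    intro l f
    exact (Equiv.sum_comp (Equiv.mulRight (Equiv.swap l a)) f).symm
  -- rewrite RHS as a double sum
  have hR : (∑ j, z j) * ∑ σ : Equiv.Perm (Fin N), ∏ j ∈ J, z (σ j)
      = ∑ σ : Equiv.Perm (Fin N), ∑ l, z (σ l) * ∏ j ∈ J, z (σ j) := by
    rw [Finset.mul_sum]
    apply Finset.sum_congr rfl
    intro σ _
    rw [← Finset.sum_mul, Equiv.sum_comp σ z]
  -- rewrite LHS as a double sum
  have hL : (N : ℝ) * ∑ σ : Equiv.Perm (Fin N), (∏ j ∈ J, z (σ j)) * z (σ a)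
      = ∑ σ : Equiv.Perm (Fin N), ∑ _l : Fin N, z (σ a) * ∏ j ∈ J, z (σ j) := by
    rw [Finset.mul_sum]
    apply Finset.sum_congr rfl
    intro σ _
    rw [Finset.sum_const, card_univ, Fintype.card_fin, nsmul_eq_mul]
    ring
  rw [hL, hR]
  calc ∑ σ : Equiv.Perm (Fin N), ∑ _l : Fin N, z (σ a) * ∏ j ∈ J, z (σ j)
      = ∑ l : Fin N, ∑ σ : Equiv.Perm (Fin N), z (σ a) * ∏ j ∈ J, z (σ j) :=
        Finset.sum_comm
    _ ≤ ∑ l : Fin N, ∑ σ : Equiv.Perm (Fin N), z (σ l) * ∏ j ∈ J, z (σ j) := ?_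
    _ = ∑ σ : Equiv.Perm (Fin N), ∑ l : Fin N, z (σ l) * ∏ j ∈ J, z (σ j) :=
        Finset.sum_comm
  apply Finset.sum_le_sum
  intro l _
  -- for each l, compare Σ_σ z(σ a) P(σ) with Σ_σ z(σ l) P(σ)
  by_cases hla : l = a
  · subst hla; exact le_refl _
  by_cases hlJ : l ∈ J
  · -- l ∈ J : use AM-GM and the swap symmetry
    have hP : ∀ σ : Equiv.Perm (Fin N),
        (∏ j ∈ J, z (σ j)) = z (σ l) * ∏ j ∈ J.erase l, z (σ j) := by
      intro σ; exact (Finset.mul_prod_erase J _ hlJ).symm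
    have hQswap : ∀ σ : Equiv.Perm (Fin N), ∀ j ∈ J.erase l,
        z ((σ * Equiv.swap l a) j) = z (σ j) := by
      intro σ j hj
      have hjl : j ≠ l := Finset.ne_of_mem_erase hj
      have hja : j ≠ a := fun h => ha (h ▸ (Finset.mem_erase.1 hj).2)
      simp [Equiv.Perm.mul_apply, Equiv.swap_apply_of_ne_of_ne hjl hja]
    -- Σ_σ z(σa)² Q(σ) = Σ_σ z(σl)² Q(σ)
    have hsym : ∑ σ : Equiv.Perm (Fin N), z (σ a) ^ 2 * ∏ j ∈ J.erase l, z (σ j)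
        = ∑ σ : Equiv.Perm (Fin N), z (σ l) ^ 2 * ∏ j ∈ J.erase l, z (σ j) := by
      rw [hswap l (fun σ => z (σ a) ^ 2 * ∏ j ∈ J.erase l, z (σ j))]
      apply Finset.sum_congr rfl
      intro σ _
      rw [Finset.prod_congr rfl (hQswap σ)]
      simp [Equiv.Perm.mul_apply]
    calc ∑ σ : Equiv.Perm (Fin N), z (σ a) * ∏ j ∈ J, z (σ j)
        = ∑ σ : Equiv.Perm (Fin N), z (σ a) * z (σ l) * ∏ j ∈ J.erase l, z (σ j) := by
          apply Finset.sum_congr rfl; intro σ _; rw [hP σ]; ring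
      _ ≤ ∑ σ : Equiv.Perm (Fin N),
            (z (σ a) ^ 2 / 2 + z (σ l) ^ 2 / 2) * ∏ j ∈ J.erase l, z (σ j) := by
          apply Finset.sum_le_sum
          intro σ _
          apply mul_le_mul_of_nonneg_right _ (Finset.prod_nonneg fun j _ => hz _)
          nlinarith [sq_nonneg (z (σ a) - z (σ l))]
      _ = (∑ σ : Equiv.Perm (Fin N), z (σ a) ^ 2 * ∏ j ∈ J.erase l, z (σ j)) / 2
            + (∑ σ : Equiv.Perm (Fin N), z (σ l) ^ 2 * ∏ j ∈ J.erase l, z (σ j)) / 2 := by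
          rw [Finset.sum_div, Finset.sum_div, ← Finset.sum_add_distrib]
          apply Finset.sum_congr rfl; intro σ _; ring
      _ = ∑ σ : Equiv.Perm (Fin N), z (σ l) ^ 2 * ∏ j ∈ J.erase l, z (σ j) := by
          rw [hsym]; ring
      _ = ∑ σ : Equiv.Perm (Fin N), z (σ l) * ∏ j ∈ J, z (σ j) := by
          apply Finset.sum_congr rfl; intro σ _; rw [hP σ]; ring
  · -- l ∉ J, l ≠ a : the two sums are equal by the swap symmetry
    have : ∑ σ : Equiv.Perm (Fin N), z (σ a) * ∏ j ∈ J, z (σ j)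
        = ∑ σ : Equiv.Perm (Fin N), z (σ l) * ∏ j ∈ J, z (σ j) := by
      rw [hswap l (fun σ => z (σ a) * ∏ j ∈ J, z (σ j))]
      apply Finset.sum_congr rfl
      intro σ _
      have hprod : ∀ j ∈ J, z ((σ * Equiv.swap l a) j) = z (σ j) := by
        intro j hj
        have hjl : j ≠ l := fun h => hlJ (h ▸ hj)
        have hja : j ≠ a := fun h => ha (h ▸ hj)
        simp [Equiv.Perm.mul_apply, Equiv.swap_apply_of_ne_of_ne hjl hja]
      rw [Finset.prod_congr rfl hprod]
      simp [Equiv.Perm.mul_apply]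
    rw [this]

/-- Maclaurin-type bound in permutation form. -/
lemma perm_prod_le (hN : 0 < N) (z : Fin N → ℝ) (hz : ∀ j, 0 ≤ z j) (J : Finset (Fin N)) :
    ∑ σ : Equiv.Perm (Fin N), ∏ j ∈ J, z (σ j)
      ≤ (N.factorial : ℝ) * ((∑ j, z j) / N) ^ J.card := by
  induction J using Finset.induction_on with
  | empty =>
    simp [Fintype.card_perm]
  | @insert a J ha ih =>
    have hNpos : (0 : ℝ) < N := Nat.cast_pos.2 hN
    have havg : (0 : ℝ) ≤ (∑ j, z j) / N := by
      apply div_nonneg (Finset.sum_nonneg fun j _ => hz j) hNpos.le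
    have step : ∑ σ : Equiv.Perm (Fin N), ∏ j ∈ insert a J, z (σ j)
        ≤ ((∑ j, z j) / N) * ∑ σ : Equiv.Perm (Fin N), ∏ j ∈ J, z (σ j) := by
      have h1 : ∑ σ : Equiv.Perm (Fin N), ∏ j ∈ insert a J, z (σ j)
          = ∑ σ : Equiv.Perm (Fin N), (∏ j ∈ J, z (σ j)) * z (σ a) := by
        apply Finset.sum_congr rfl; intro σ _
        rw [Finset.prod_insert ha]; ring
      rw [h1, div_mul_eq_mul_div, le_div_iff₀ hNpos, mul_comm _ (N:ℝ)]
      exact key_step z hz J a ha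
    calc ∑ σ : Equiv.Perm (Fin N), ∏ j ∈ insert a J, z (σ j)
        ≤ ((∑ j, z j) / N) * ∑ σ : Equiv.Perm (Fin N), ∏ j ∈ J, z (σ j) := step
      _ ≤ ((∑ j, z j) / N) * ((N.factorial : ℝ) * ((∑ j, z j) / N) ^ J.card) :=
          mul_le_mul_of_nonneg_left ih havg
      _ = (N.factorial : ℝ) * ((∑ j, z j) / N) ^ (insert a J).card := by
          rw [Finset.card_insert_of_notMem ha, pow_succ]; ring

/-- MGF bound for the permuted row sum. -/
lemma row_mgf (hN : 0 < N) (b0 lam : ℝ) (hb0 : 0 < b0) (hlam : 0 < lam)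
    (hc3 : lam * b0 < 3) (y : Fin N → ℝ) (hsum : ∑ j, y j = 0) (hbd : ∀ j, y j ≤ b0)
    (J : Finset (Fin N)) :
    ∑ σ : Equiv.Perm (Fin N), Real.exp (lam * ∑ j ∈ J, y (σ j))
      ≤ (N.factorial : ℝ) * Real.exp
          ((J.card : ℝ) * (lam ^ 2 * ((∑ j, y j ^ 2) / N) / (2 * (1 - lam * b0 / 3)))) := by
  set z : Fin N → ℝ := fun j => Real.exp (lam * y j) with hz_def
  have hz : ∀ j, 0 ≤ z j := fun j => (Real.exp_pos _).le
  have h1 : ∀ σ : Equiv.Perm (Fin N),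
      Real.exp (lam * ∑ j ∈ J, y (σ j)) = ∏ j ∈ J, z (σ j) := by
    intro σ
    rw [Finset.mul_sum, Real.exp_sum]
  have hc0 : 0 < lam * b0 := mul_pos hlam hb0
  -- base bound
  have hbase : (∑ j, z j) / N ≤ 1 + lam ^ 2 * ((∑ j, y j ^ 2) / N) / (2 * (1 - lam * b0 / 3)) := by
    have hNpos : (0:ℝ) < N := Nat.cast_pos.2 hN
    rw [div_le_iff₀ hNpos]
    have hptw : ∀ j, z j ≤ 1 + lam * y j + (lam * y j) ^ 2 / (2 * (1 - lam * b0 / 3)) := by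
      intro j
      exact exp_pointwise _ _ hc0 hc3 (mul_le_mul_of_nonneg_left (hbd j) hlam.le)
    calc ∑ j, z j ≤ ∑ j, (1 + lam * y j + (lam * y j) ^ 2 / (2 * (1 - lam * b0 / 3))) :=
          Finset.sum_le_sum fun j _ => hptw j
      _ = (N : ℝ) + lam * (∑ j, y j) + lam ^ 2 * (∑ j, y j ^ 2) / (2 * (1 - lam * b0 / 3)) := by
          have hsq : ∑ j, (lam * y j) ^ 2 = lam ^ 2 * ∑ j, y j ^ 2 := by
            rw [Finset.mul_sum]; apply Finset.sum_congr rfl; intro j _; ring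
          rw [Finset.sum_add_distrib, Finset.sum_add_distrib, ← Finset.mul_sum, ← Finset.sum_div,
            Finset.sum_const, card_univ, Fintype.card_fin, nsmul_eq_mul, mul_one, hsq]
      _ = (1 + lam ^ 2 * ((∑ j, y j ^ 2) / N) / (2 * (1 - lam * b0 / 3))) * N := by
          have hN' : (N:ℝ) ≠ 0 := hNpos.ne'
          have hβ' : (6 - lam * b0 * 2) ≠ 0 := by nlinarith
          have h3 : (3:ℝ) - lam * b0 ≠ 0 := by nlinarith
          rw [hsum]
          field_simp [h3]
          ring
  have hβ : (0:ℝ) < 2 * (1 - lam * b0 / 3) := by nlinarith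
  have hv : (0:ℝ) ≤ lam ^ 2 * ((∑ j, y j ^ 2) / N) / (2 * (1 - lam * b0 / 3)) := by
    apply div_nonneg _ hβ.le
    apply mul_nonneg (sq_nonneg _)
    apply div_nonneg (Finset.sum_nonneg fun j _ => sq_nonneg _) (Nat.cast_nonneg _)
  calc ∑ σ : Equiv.Perm (Fin N), Real.exp (lam * ∑ j ∈ J, y (σ j))
      = ∑ σ : Equiv.Perm (Fin N), ∏ j ∈ J, z (σ j) := Finset.sum_congr rfl fun σ _ => h1 σ
    _ ≤ (N.factorial : ℝ) * ((∑ j, z j) / N) ^ J.card := perm_prod_le hN z hz J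
    _ ≤ (N.factorial : ℝ) * Real.exp
          ((J.card : ℝ) * (lam ^ 2 * ((∑ j, y j ^ 2) / N) / (2 * (1 - lam * b0 / 3)))) := by
        apply mul_le_mul_of_nonneg_left _ (Nat.cast_nonneg _)
        calc ((∑ j, z j) / N) ^ J.card
            ≤ (1 + lam ^ 2 * ((∑ j, y j ^ 2) / N) / (2 * (1 - lam * b0 / 3))) ^ J.card := by
              apply pow_le_pow_left₀ _ hbase
              exact div_nonneg (Finset.sum_nonneg fun j _ => hz j) (Nat.cast_nonneg _)
          _ ≤ (Real.exp (lam ^ 2 * ((∑ j, y j ^ 2) / N) / (2 * (1 - lam * b0 / 3)))) ^ J.card := by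
              apply pow_le_pow_left₀ (by linarith)
              linarith [Real.add_one_le_exp (lam ^ 2 * ((∑ j, y j ^ 2) / N) / (2 * (1 - lam * b0 / 3)))]
          _ = Real.exp ((J.card : ℝ) * (lam ^ 2 * ((∑ j, y j ^ 2) / N) / (2 * (1 - lam * b0 / 3)))) := by
              rw [← Real.exp_nat_mul]
def toPerm (f : Fin M → Equiv.Perm (Fin N)) : Equiv.Perm (Fin M × Fin N) :=
  Equiv.prodCongrRight f

lemma toPerm_mem (f : Fin M → Equiv.Perm (Fin N)) : toPerm f ∈ Pi1 M N := fun p => rfl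

lemma toPerm_inj : Function.Injective (toPerm (M := M) (N := N)) := by
  intro f g h
  funext i
  refine Equiv.ext fun j => ?_
  have : (toPerm f) (i, j) = (toPerm g) (i, j) := by rw [h]
  simpa [toPerm] using congrArg Prod.snd this

lemma toPerm_surj (π : Equiv.Perm (Fin M × Fin N)) (hπ : π ∈ Pi1 M N) :
    ∃ f, toPerm f = π := by
  have hinj : ∀ i : Fin M, Function.Injective (fun j : Fin N => (π (i, j)).2) := by
    intro i j j' h
    have h1 : π (i, j) = π (i, j') :=
      Prod.ext_iff.mpr ⟨(hπ (i, j)).trans (hπ (i, j')).symm, h⟩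
    have h2 := π.injective h1
    simpa using congrArg Prod.snd h2
  refine ⟨fun i => Equiv.ofBijective _ (Finite.injective_iff_bijective.1 (hinj i)), ?_⟩
  refine Equiv.ext fun p => ?_
  obtain ⟨i, j⟩ := p
  have h1 : (π (i, j)).1 = i := hπ (i, j)
  simp only [toPerm, Equiv.prodCongrRight_apply, Equiv.ofBijective_apply]
  conv_rhs => rw [show π (i, j) = ((π (i, j)).1, (π (i, j)).2) from rfl, h1]

lemma permute_toPerm (f : Fin M → Equiv.Perm (Fin N)) (x : Fin M → Fin N → ℝ) (i : Fin M)
    (j : Fin N) : permute (toPerm f) x i j = x i (f i j) := rfl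

lemma ncard_pi1_sep (P : Equiv.Perm (Fin M × Fin N) → Prop) [DecidablePred P] :
    {π ∈ Pi1 M N | P π}.ncard
      = (Finset.univ.filter (fun f : Fin M → Equiv.Perm (Fin N) => P (toPerm f))).card := by
  have bij : Function.Bijective
      (fun f : {f : Fin M → Equiv.Perm (Fin N) // P (toPerm f)} =>
        (⟨toPerm f.1, toPerm_mem f.1, f.2⟩ :
          {π : Equiv.Perm (Fin M × Fin N) // π ∈ Pi1 M N ∧ P π})) := by
    constructor
    · intro f g h
      exact Subtype.ext (toPerm_inj (congrArg Subtype.val h))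
    · rintro ⟨π, hπ, hP⟩
      obtain ⟨f, rfl⟩ := toPerm_surj π hπ
      exact ⟨⟨f, hP⟩, rfl⟩
  calc {π ∈ Pi1 M N | P π}.ncard
      = Nat.card {π : Equiv.Perm (Fin M × Fin N) // π ∈ Pi1 M N ∧ P π} :=
        (Nat.card_coe_set_eq _).symm
    _ = Nat.card {f : Fin M → Equiv.Perm (Fin N) // P (toPerm f)} :=
        (Nat.card_eq_of_bijective _ bij).symm
    _ = Fintype.card {f : Fin M → Equiv.Perm (Fin N) // P (toPerm f)} := Nat.card_eq_fintype_card
    _ = (Finset.univ.filter (fun f : Fin M → Equiv.Perm (Fin N) => P (toPerm f))).card :=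
        Fintype.card_subtype _

lemma ncard_pi1 : (Pi1 M N).ncard = (N.factorial) ^ M := by
  classical
  have := ncard_pi1_sep (M := M) (N := N) (fun _ => True)
  simp only [Finset.filter_true_of_mem (fun _ _ => trivial)] at this
  simp only [Set.sep_true] at this
  rw [this]
  simp [Finset.card_univ, Fintype.card_perm]

lemma scan_attained {M N m n : ℕ} (hm : m ≤ M) (hn : n ≤ N) (x : Fin M → Fin N → ℝ) :
    ∃ I : Finset (Fin M), ∃ J : Finset (Fin N), I.card = m ∧ J.card = n ∧
      scan M N m n x = ∑ i ∈ I, ∑ j ∈ J, x i j := by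
  set S := {s : ℝ | ∃ I : Finset (Fin M), ∃ J : Finset (Fin N),
    I.card = m ∧ J.card = n ∧ s = ∑ i ∈ I, ∑ j ∈ J, x i j} with hS
  have hsub : S ⊆ Set.range (fun p : Finset (Fin M) × Finset (Fin N) =>
      ∑ i ∈ p.1, ∑ j ∈ p.2, x i j) := by
    rintro s ⟨I, J, _, _, rfl⟩
    exact ⟨(I, J), rfl⟩
  have hfin : S.Finite := Set.Finite.subset (Set.finite_range _) hsub
  have hne : S.Nonempty := by
    obtain ⟨I, -, hI⟩ := Finset.exists_subset_card_eq
      (show m ≤ (univ : Finset (Fin M)).card by simpa using hm)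
    obtain ⟨J, -, hJ⟩ := Finset.exists_subset_card_eq
      (show n ≤ (univ : Finset (Fin N)).card by simpa using hn)
    exact ⟨_, I, J, hI, hJ, rfl⟩
  have := hne.csSup_mem hfin
  exact this

lemma pair_bound (hN : 0 < N) (x : Fin M → Fin N → ℝ) (b0 lam ζ s2 : ℝ)
    (hb0 : 0 < b0) (hlam : 0 < lam) (hc3 : lam * b0 < 3)
    (hrow : ∀ i, ∑ j, x i j = 0) (hbd : ∀ i j, x i j ≤ b0)
    (hs2 : ∀ i, (∑ j, x i j ^ 2) / (N : ℝ) ≤ s2)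
    (I : Finset (Fin M)) (J : Finset (Fin N)) :
    ((Finset.univ.filter (fun f : Fin M → Equiv.Perm (Fin N) =>
        ζ ≤ ∑ i ∈ I, ∑ j ∈ J, x i (f i j))).card : ℝ)
      ≤ (N.factorial : ℝ) ^ M * Real.exp (-(lam * ζ)
          + (I.card : ℝ) * ((J.card : ℝ) * (lam ^ 2 * s2 / (2 * (1 - lam * b0 / 3))))) := by
  classical
  have hd : (0:ℝ) < 2 * (1 - lam * b0 / 3) := by nlinarith
  set T : Fin M → Equiv.Perm (Fin N) → ℝ := fun i σ => ∑ j ∈ J, x i (σ j) with hT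
  set S : (Fin M → Equiv.Perm (Fin N)) → ℝ := fun f => ∑ i ∈ I, T i (f i) with hS
  set P : (Fin M → Equiv.Perm (Fin N)) → Prop := fun f => ζ ≤ S f with hP
  set g : Fin M → Equiv.Perm (Fin N) → ℝ :=
    fun i σ => if i ∈ I then Real.exp (lam * T i σ) else 1 with hg
  set d : ℝ := 2 * (1 - lam * b0 / 3) with hd_def
  set E : ℝ := Real.exp ((J.card : ℝ) * (lam ^ 2 * s2 / d)) with hE
  set B : Fin M → ℝ := fun i => if i ∈ I then (N.factorial : ℝ) * E else (N.factorial : ℝ)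
    with hB
  have step1 : ((Finset.univ.filter P).card : ℝ) ≤ ∑ f, Real.exp (lam * (S f - ζ)) := by
    rw [Finset.card_filter]
    push_cast
    apply Finset.sum_le_sum
    intro f _
    by_cases h : P f
    · rw [if_pos h]
      apply Real.one_le_exp
      have h2 : 0 ≤ S f - ζ := by
        have := h; simp only [hP] at this; linarith
      positivity
    · rw [if_neg h]
      positivity
  have step2 : ∑ f, Real.exp (lam * (S f - ζ))
      = Real.exp (-(lam * ζ)) * ∑ f, Real.exp (lam * S f) := by
    rw [Finset.mul_sum]
    apply Finset.sum_congr rfl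
    intro f _
    rw [← Real.exp_add]
    congr 1
    ring
  have step3 : ∑ f, Real.exp (lam * S f) = ∏ i, ∑ σ : Equiv.Perm (Fin N), g i σ := by
    rw [Finset.prod_univ_sum, Fintype.piFinset_univ]
    apply Finset.sum_congr rfl
    intro f _
    rw [hS, Finset.mul_sum, Real.exp_sum]
    calc ∏ i ∈ I, Real.exp (lam * T i (f i))
        = ∏ i ∈ I, g i (f i) := by
          apply Finset.prod_congr rfl; intro i hi; simp [hg, hi]
      _ = ∏ i, g i (f i) := Finset.prod_subset (Finset.subset_univ I)
          (fun i _ hi => by simp [hg, hi])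
  have step4 : ∏ i, ∑ σ : Equiv.Perm (Fin N), g i σ ≤ ∏ i, B i := by
    apply Finset.prod_le_prod
    · intro i _
      apply Finset.sum_nonneg
      intro σ _
      by_cases h : i ∈ I <;> simp [hg, h, (Real.exp_pos _).le]
    · intro i _
      by_cases h : i ∈ I
      · simp only [hg, hB, h, if_true]
        calc ∑ σ : Equiv.Perm (Fin N), Real.exp (lam * T i σ)
            ≤ (N.factorial : ℝ) * Real.exp
                ((J.card : ℝ) * (lam ^ 2 * ((∑ j, x i j ^ 2) / N) / d)) :=
              row_mgf hN b0 lam hb0 hlam hc3 (x i) (hrow i) (hbd i) J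
          _ ≤ (N.factorial : ℝ) * E := by
              apply mul_le_mul_of_nonneg_left _ (Nat.cast_nonneg _)
              rw [hE]
              apply Real.exp_le_exp.2
              gcongr
              exact hs2 i
      · simp [hg, hB, h, Finset.card_univ, Fintype.card_perm]
  have step5 : ∏ i, B i = (N.factorial : ℝ) ^ M
      * Real.exp ((I.card : ℝ) * ((J.card : ℝ) * (lam ^ 2 * s2 / d))) := by
    rw [← Finset.prod_sdiff (Finset.subset_univ I)]
    have h1 : ∏ i ∈ (Finset.univ \ I), B i = (N.factorial : ℝ) ^ (M - I.card) := by
      rw [Finset.prod_congr rfl (fun i hi => ?_), Finset.prod_const, Finset.card_sdiff_of_subset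
        (Finset.subset_univ I), Finset.card_univ, Fintype.card_fin]
      simp only [hB]
      rw [if_neg (Finset.mem_sdiff.1 hi).2]
    have h2 : ∏ i ∈ I, B i = ((N.factorial : ℝ) * E) ^ I.card := by
      rw [Finset.prod_congr rfl (fun i hi => ?_), Finset.prod_const]
      simp only [hB]; rw [if_pos hi]
    rw [h1, h2, mul_pow, ← Real.exp_nat_mul]
    have hcard : I.card ≤ M := by
      simpa using Finset.card_le_card (Finset.subset_univ I)
    rw [show (N.factorial : ℝ) ^ (M - I.card) * ((N.factorial:ℝ) ^ I.card
        * Real.exp ((I.card : ℝ) * ((J.card : ℝ) * (lam ^ 2 * s2 / d))))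
      = ((N.factorial : ℝ) ^ (M - I.card) * (N.factorial:ℝ) ^ I.card)
        * Real.exp ((I.card : ℝ) * ((J.card : ℝ) * (lam ^ 2 * s2 / d))) from by ring,
      ← pow_add, Nat.sub_add_cancel hcard]
  calc ((Finset.univ.filter P).card : ℝ)
      ≤ ∑ f, Real.exp (lam * (S f - ζ)) := step1
    _ = Real.exp (-(lam * ζ)) * ∑ f, Real.exp (lam * S f) := step2
    _ = Real.exp (-(lam * ζ)) * ∏ i, ∑ σ : Equiv.Perm (Fin N), g i σ := by rw [step3]
    _ ≤ Real.exp (-(lam * ζ)) * ∏ i, B i := by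
        apply mul_le_mul_of_nonneg_left step4 (Real.exp_pos _).le
    _ = (N.factorial : ℝ) ^ M * Real.exp (-(lam * ζ)
          + (I.card : ℝ) * ((J.card : ℝ) * (lam ^ 2 * s2 / d))) := by
        rw [step5]
        conv_rhs => rw [Real.exp_add]
        ring
end Aux

/-- Bound on the unidimensional permutation p-value of the scan statistic for a matrix
with centered rows and entries bounded above by `b₀`. -/
theorem perm_pval_bound (M N m n : ℕ) (hm1 : 1 ≤ m) (hmM : m ≤ M)
    (hn1 : 1 ≤ n) (hnN : n ≤ N)
    (x : Fin M → Fin N → ℝ) (b0 : ℝ) (hb0 : 0 < b0)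
    (hrow : ∀ i, ∑ j, x i j = 0) (hbd : ∀ i j, x i j ≤ b0)
    (hpos : 0 < scan M N m n x) :
    permPval M N m n (Pi1 M N) x
      ≤ (Nat.choose M m : ℝ) * (Nat.choose N n : ℝ) *
          Real.exp (-(scan M N m n x ^ 2) /
            (2 * (m : ℝ) * (n : ℝ) * (⨆ i : Fin M, (∑ j, x i j ^ 2) / (N : ℝ))
              + (2 / 3) * b0 * scan M N m n x)) := by
  classical
  have hN : 0 < N := lt_of_lt_of_le hn1 hnN
  have hNR : (0:ℝ) < N := by exact_mod_cast hN
  set ζ : ℝ := scan M N m n x with hζ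
  set v : Fin M → ℝ := fun i => (∑ j, x i j ^ 2) / (N : ℝ) with hv
  set s2 : ℝ := ⨆ i : Fin M, v i with hs2
  have hv_le : ∀ i, v i ≤ s2 := fun i =>
    le_ciSup (Set.Finite.bddAbove (Set.finite_range v)) i
  obtain ⟨I₀, J₀, hI₀, hJ₀, hζeq⟩ := scan_attained hmM hnN x
  have hex : ∃ i j, 0 < x i j := by
    by_contra h
    push_neg at h
    have hle : ζ ≤ 0 := by
      rw [hζ, hζeq]
      exact Finset.sum_nonpos fun i _ => Finset.sum_nonpos fun j _ => h i j
    linarith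
  obtain ⟨i0, j0, hx0⟩ := hex
  have hs2pos : 0 < s2 := by
    refine lt_of_lt_of_le ?_ (hv_le i0)
    apply div_pos _ hNR
    refine lt_of_lt_of_le (by positivity : (0:ℝ) < x i0 j0 ^ 2) ?_
    exact Finset.single_le_sum (f := fun j => x i0 j ^ 2) (fun j _ => sq_nonneg _) (Finset.mem_univ j0)
  have hmR : (0:ℝ) < m := by exact_mod_cast hm1
  have hnR : (0:ℝ) < n := by exact_mod_cast hn1
  set V : ℝ := (m:ℝ) * n * s2 with hV
  have hVpos : 0 < V := mul_pos (mul_pos hmR hnR) hs2pos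
  have hD1 : 0 < V + b0 * ζ / 3 := by nlinarith
  set lam : ℝ := ζ / (V + b0 * ζ / 3) with hlam
  have hlam_pos : 0 < lam := div_pos hpos hD1
  have hc3 : lam * b0 < 3 := by
    rw [hlam, div_mul_eq_mul_div, div_lt_iff₀ hD1]
    nlinarith
  have hd : (0:ℝ) < 2 * (1 - lam * b0 / 3) := by nlinarith [mul_pos hlam_pos hb0]
  -- counting
  have hNum := ncard_pi1_sep (M := M) (N := N)
    (fun π => ζ ≤ scan M N m n (permute π x))
  set pairs := (Finset.powersetCard m (Finset.univ : Finset (Fin M))) ×ˢ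
    (Finset.powersetCard n (Finset.univ : Finset (Fin N))) with hpairs
  have hsubset : (Finset.univ.filter (fun f : Fin M → Equiv.Perm (Fin N) =>
      ζ ≤ scan M N m n (permute (toPerm f) x)))
      ⊆ pairs.biUnion (fun p => Finset.univ.filter (fun f : Fin M → Equiv.Perm (Fin N) =>
        ζ ≤ ∑ i ∈ p.1, ∑ j ∈ p.2, x i (f i j))) := by
    intro f hf
    simp only [Finset.mem_filter, Finset.mem_univ, true_and] at hf
    obtain ⟨I, J, hI, hJ, heq⟩ := scan_attained hmM hnN (permute (toPerm f) x)
    rw [heq] at hf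
    apply Finset.mem_biUnion.2
    refine ⟨(I, J), ?_, ?_⟩
    · rw [hpairs, Finset.mem_product]
      exact ⟨Finset.mem_powersetCard_univ.2 hI, Finset.mem_powersetCard_univ.2 hJ⟩
    · simp only [Finset.mem_filter, Finset.mem_univ, true_and]
      exact hf
  set RHSexp : ℝ := -(lam * ζ) + (m:ℝ) * ((n:ℝ) * (lam ^ 2 * s2 / (2 * (1 - lam * b0 / 3))))
    with hRHSexp
  have hcount : (({π ∈ Pi1 M N | ζ ≤ scan M N m n (permute π x)}).ncard : ℝ)
      ≤ (Nat.choose M m : ℝ) * (Nat.choose N n : ℝ)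
        * ((N.factorial : ℝ) ^ M * Real.exp RHSexp) := by
    rw [hNum]
    have h1 : ((Finset.univ.filter (fun f : Fin M → Equiv.Perm (Fin N) =>
        ζ ≤ scan M N m n (permute (toPerm f) x))).card : ℝ)
        ≤ ∑ p ∈ pairs, ((Finset.univ.filter (fun f : Fin M → Equiv.Perm (Fin N) =>
            ζ ≤ ∑ i ∈ p.1, ∑ j ∈ p.2, x i (f i j))).card : ℝ) := by
      rw [← Nat.cast_sum]
      exact_mod_cast le_trans (Finset.card_le_card hsubset) Finset.card_biUnion_le
    refine le_trans h1 ?_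
    have h2 : ∀ p ∈ pairs, ((Finset.univ.filter (fun f : Fin M → Equiv.Perm (Fin N) =>
        ζ ≤ ∑ i ∈ p.1, ∑ j ∈ p.2, x i (f i j))).card : ℝ)
        ≤ (N.factorial : ℝ) ^ M * Real.exp RHSexp := by
      intro p hp
      rw [hpairs, Finset.mem_product] at hp
      have hpc1 : p.1.card = m := Finset.mem_powersetCard_univ.1 hp.1
      have hpc2 : p.2.card = n := Finset.mem_powersetCard_univ.1 hp.2
      have := pair_bound hN x b0 lam ζ s2 hb0 hlam_pos hc3 hrow hbd hv_le p.1 p.2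
      rw [hpc1, hpc2] at this
      exact this
    calc ∑ p ∈ pairs, ((Finset.univ.filter (fun f : Fin M → Equiv.Perm (Fin N) =>
            ζ ≤ ∑ i ∈ p.1, ∑ j ∈ p.2, x i (f i j))).card : ℝ)
        ≤ ∑ _p ∈ pairs, (N.factorial : ℝ) ^ M * Real.exp RHSexp :=
          Finset.sum_le_sum h2
      _ = (pairs.card : ℝ) * ((N.factorial : ℝ) ^ M * Real.exp RHSexp) := by
          rw [Finset.sum_const, nsmul_eq_mul]
      _ = (Nat.choose M m : ℝ) * (Nat.choose N n : ℝ)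
            * ((N.factorial : ℝ) ^ M * Real.exp RHSexp) := by
          rw [hpairs, Finset.card_product, Finset.card_powersetCard, Finset.card_powersetCard,
            Finset.card_univ, Finset.card_univ, Fintype.card_fin, Fintype.card_fin]
          push_cast
          ring
  -- exponent identity
  have hexp_eq : RHSexp = -(ζ ^ 2) / (2 * (m:ℝ) * (n:ℝ) * s2 + 2 / 3 * b0 * ζ) := by
    have hd_eq : 2 * (1 - lam * b0 / 3) = 2 * V / (V + b0 * ζ / 3) := by
      rw [hlam]
      field_simp
      ring
    rw [hRHSexp, hlam, hd_eq]
    have h2D : 2 * (m:ℝ) * (n:ℝ) * s2 + 2 / 3 * b0 * ζ = 2 * (V + b0 * ζ / 3) := by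
      rw [hV]; ring
    rw [h2D]
    field_simp
    ring
  -- conclude
  have hDen : ((Pi1 M N).ncard : ℝ) = (N.factorial : ℝ) ^ M := by
    rw [ncard_pi1]; push_cast; ring
  have hfacpos : (0:ℝ) < (N.factorial : ℝ) ^ M := by positivity
  rw [permPval, hDen, div_le_iff₀ hfacpos]
  calc (({π ∈ Pi1 M N | ζ ≤ scan M N m n (permute π x)}).ncard : ℝ)
      ≤ (Nat.choose M m : ℝ) * (Nat.choose N n : ℝ)
        * ((N.factorial : ℝ) ^ M * Real.exp RHSexp) := hcount
    _ = (Nat.choose M m : ℝ) * (Nat.choose N n : ℝ) *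
          Real.exp (-(ζ ^ 2) / (2 * (m : ℝ) * (n : ℝ) * s2 + 2 / 3 * b0 * ζ))
          * (N.factorial : ℝ) ^ M := by
        rw [← hexp_eq]; ring
end
end

section
/- Let ν be a Borel probability measure on ℝ with mean 0 and variance 1 such that φ(θ) := ∫ e^{θx} ν(dx) < ∞ for some θ > 0, and set θ⋆ := sup{θ > 0 : φ(θ) < ∞}. Fix θ̄ ∈ (0, θ⋆). Then there exists a constant γ̄ > 0 (depending only on ν and θ̄) such that: for every sequence where, for each k, X₁, …, X_k are independent with X_j distributed as the exponential tilt f_{θ_j} of ν for some θ_j ∈ [0, θ̄], one has P(max_{j∈[k]} X_j ≤ γ̄·log k) → 1 as k → ∞. -/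
open MeasureTheory Filter

noncomputable section

/-- The moment generating function of `ν` at `θ`: `φ(θ) = ∫ e^{θx} ν(dx)`. -/
def phi (ν : Measure ℝ) (θ : ℝ) : ℝ := ∫ x, Real.exp (θ * x) ∂ν

/-- The exponential tilt `f_θ` of `ν`, with density `e^{θx}/φ(θ)` with respect to `ν`. -/
def expTilt (ν : Measure ℝ) (θ : ℝ) : Measure ℝ :=
  ν.withDensity fun x => ENNReal.ofReal (Real.exp (θ * x) / phi ν θ)


variable {ν : Measure ℝ} [IsProbabilityMeasure ν]

lemma integrable_exp_of_le {θ θ' : ℝ} (h0 : 0 ≤ θ) (h1 : θ ≤ θ')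
    (hI : Integrable (fun x => Real.exp (θ' * x)) ν) :
    Integrable (fun x => Real.exp (θ * x)) ν := by
  refine Integrable.mono' (g := fun x => 1 + Real.exp (θ' * x))
    ((integrable_const 1).add hI)
    (Continuous.aestronglyMeasurable (by continuity)) ?_
  filter_upwards with x
  rw [Real.norm_eq_abs, abs_of_pos (Real.exp_pos _)]
  rcases le_or_gt 0 x with hx | hx
  · have : θ * x ≤ θ' * x := mul_le_mul_of_nonneg_right h1 hx
    have := Real.exp_le_exp.2 this
    linarith [Real.exp_pos (θ' * x)]
  · have : θ * x ≤ 0 := mul_nonpos_of_nonneg_of_nonpos h0 hx.le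
    have := Real.exp_le_exp.2 this
    simp only [Real.exp_zero] at this
    linarith [Real.exp_pos (θ' * x)]

lemma integrable_id' (hint2 : Integrable (fun x => x ^ 2) ν) :
    Integrable (fun x : ℝ => x) ν := by
  refine Integrable.mono' (g := fun x => 1 + x ^ 2)
    ((integrable_const 1).add hint2)
    (Continuous.aestronglyMeasurable (by continuity)) ?_
  filter_upwards with x
  rw [Real.norm_eq_abs]
  nlinarith [sq_nonneg (|x| - 1), abs_nonneg x, sq_abs x]

lemma one_le_phi {θ : ℝ} (h0 : 0 ≤ θ) (hmean : ∫ x, x ∂ν = 0)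
    (hx : Integrable (fun x : ℝ => x) ν)
    (hI : Integrable (fun x => Real.exp (θ * x)) ν) : 1 ≤ phi ν θ := by
  have hle : ∀ x : ℝ, θ * x + 1 ≤ Real.exp (θ * x) := fun x => Real.add_one_le_exp _
  have hint : Integrable (fun x => θ * x + 1) ν := ((hx.const_mul θ).add (integrable_const 1))
  have := integral_mono hint hI (fun x => hle x)
  rwa [integral_add (hx.const_mul θ) (integrable_const 1), integral_const_mul,
    hmean, mul_zero, zero_add, integral_const, probReal_univ, one_smul] at this

lemma isProbabilityMeasure_expTilt {θ : ℝ}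
    (hI : Integrable (fun x => Real.exp (θ * x)) ν) (hphi : 0 < phi ν θ) :
    IsProbabilityMeasure (expTilt ν θ) := by
  constructor
  rw [expTilt, withDensity_apply _ MeasurableSet.univ, Measure.restrict_univ,
    ← ofReal_integral_eq_lintegral_ofReal (hI.div_const _)
      (Filter.Eventually.of_forall fun x => div_nonneg (Real.exp_pos _).le hphi.le)]
  rw [integral_div]
  rw [show (∫ x, Real.exp (θ * x) ∂ν) = phi ν θ from rfl, div_self hphi.ne', ENNReal.ofReal_one]

lemma expTilt_tail {θ θbar θ' t : ℝ} (h0 : 0 ≤ θ) (h1 : θ ≤ θbar) (h2 : θbar < θ')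
    (ht : 0 ≤ t) (hphi : 1 ≤ phi ν θ)
    (hI' : Integrable (fun x => Real.exp (θ' * x)) ν) :
    expTilt ν θ (Set.Ioi t) ≤ ENNReal.ofReal (Real.exp ((θbar - θ') * t) * phi ν θ') := by
  rw [expTilt, withDensity_apply _ measurableSet_Ioi]
  have hbd : ∀ x ∈ Set.Ioi t,
      ENNReal.ofReal (Real.exp (θ * x) / phi ν θ) ≤
        ENNReal.ofReal (Real.exp ((θbar - θ') * t) * Real.exp (θ' * x)) := by
    intro x hx
    apply ENNReal.ofReal_le_ofReal
    have hd : Real.exp (θ * x) / phi ν θ ≤ Real.exp (θ * x) := by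
      apply div_le_self (Real.exp_pos _).le hphi
    refine hd.trans ?_
    rw [← Real.exp_add]
    apply Real.exp_le_exp.2
    have hxt : t ≤ x := le_of_lt hx
    nlinarith
  calc ∫⁻ x in Set.Ioi t, ENNReal.ofReal (Real.exp (θ * x) / phi ν θ) ∂ν
      ≤ ∫⁻ x in Set.Ioi t, ENNReal.ofReal (Real.exp ((θbar - θ') * t) * Real.exp (θ' * x)) ∂ν :=
        setLIntegral_mono' measurableSet_Ioi hbd
    _ ≤ ∫⁻ x, ENNReal.ofReal (Real.exp ((θbar - θ') * t) * Real.exp (θ' * x)) ∂ν :=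
        setLIntegral_le_lintegral _ _
    _ = ENNReal.ofReal (Real.exp ((θbar - θ') * t) * phi ν θ') := by
        rw [← ofReal_integral_eq_lintegral_ofReal ((hI'.const_mul _))
          (Filter.Eventually.of_forall fun x =>
            mul_nonneg (Real.exp_pos _).le (Real.exp_pos _).le),
          integral_const_mul]
        rfl

/-- Uniform sub-exponential right tail of the tilted family: there is `γ̄ > 0` such that
for any choice of tilt parameters in `[0, θ̄]` with `θ̄ < θ⋆`, the maximum of `k`
independent tilted observations is at most `γ̄ log k` with probability tending to 1. -/
theorem max_tilted_le_log
    (ν : Measure ℝ) [IsProbabilityMeasure ν]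
    (hmean : ∫ x, x ∂ν = 0) (hint2 : Integrable (fun x => x ^ 2) ν)
    (hvar : ∫ x, x ^ 2 ∂ν = 1)
    (θbar : ℝ) (hθbar : 0 < θbar)
    (hθstar : ∃ θ' : ℝ, θbar < θ' ∧ Integrable (fun x => Real.exp (θ' * x)) ν) :
    ∃ γ : ℝ, 0 < γ ∧ ∀ θs : (k : ℕ) → Fin k → ℝ,
      (∀ k j, 0 ≤ θs k j ∧ θs k j ≤ θbar) →
      Tendsto (fun k => (Measure.pi fun j : Fin k => expTilt ν (θs k j))
          {ω | ∀ j, ω j ≤ γ * Real.log k}) atTop (nhds 1) := by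
  obtain ⟨θ', hθ', hI'⟩ := hθstar
  have hx : Integrable (fun x : ℝ => x) ν := integrable_id' hint2
  set C := phi ν θ' with hC
  have hC1 : 1 ≤ C := one_le_phi (by linarith) hmean hx hI'
  have hγpos : 0 < 2 / (θ' - θbar) := div_pos two_pos (by linarith)
  refine ⟨2 / (θ' - θbar), hγpos, fun θs hθs => ?_⟩
  -- each tilted measure is a probability measure
  have hIθ : ∀ k j, Integrable (fun x => Real.exp (θs k j * x)) ν := fun k j =>
    integrable_exp_of_le (hθs k j).1 (le_of_lt (lt_of_le_of_lt (hθs k j).2 hθ')) hI'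
  have hphiθ : ∀ k j, 1 ≤ phi ν (θs k j) := fun k j =>
    one_le_phi (hθs k j).1 hmean hx (hIθ k j)
  have hprob : ∀ k j, IsProbabilityMeasure (expTilt ν (θs k j)) := fun k j =>
    isProbabilityMeasure_expTilt (hIθ k j) (by linarith [hphiθ k j])
  set γ := 2 / (θ' - θbar) with hγ
  -- notation
  set P : (k : ℕ) → Measure (Fin k → ℝ) := fun k => Measure.pi fun j => expTilt ν (θs k j)
    with hP
  have hmeas : ∀ k : ℕ, MeasurableSet {ω : Fin k → ℝ | ∀ j, ω j ≤ γ * Real.log k} := by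
    intro k
    have : {ω : Fin k → ℝ | ∀ j, ω j ≤ γ * Real.log k}
        = ⋂ j, (fun ω : Fin k → ℝ => ω j) ⁻¹' Set.Iic (γ * Real.log k) := by
      ext ω; simp
    rw [this]
    exact MeasurableSet.iInter fun j => (measurable_pi_apply j) measurableSet_Iic
  have hPprob : ∀ k, IsProbabilityMeasure (P k) := by
    intro k
    haveI := hprob k
    infer_instance
  -- the complement measure
  set a : ℕ → ENNReal := fun k => P k {ω : Fin k → ℝ | ∀ j, ω j ≤ γ * Real.log k}ᶜ with ha
  have hsplit : ∀ k, P k {ω : Fin k → ℝ | ∀ j, ω j ≤ γ * Real.log k} = 1 - a k := by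
    intro k
    haveI := hPprob k
    have := prob_compl_eq_one_sub (μ := P k) (hmeas k).compl
    rwa [compl_compl] at this
  -- union bound for a k
  have hak : ∀ k : ℕ, 1 ≤ k → a k ≤ ENNReal.ofReal (C / k) := by
    intro k hk
    have hk0 : (0:ℝ) < k := by exact_mod_cast hk
    have hlogk : 0 ≤ Real.log k := Real.log_nonneg (by exact_mod_cast hk)
    have ht : 0 ≤ γ * Real.log k := mul_nonneg hγpos.le hlogk
    -- single coordinate bound
    have hsingle : ∀ j : Fin k,
        P k ((fun ω : Fin k → ℝ => ω j) ⁻¹' Set.Ioi (γ * Real.log k))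
          ≤ ENNReal.ofReal (C / k ^ 2) := by
      intro j
      classical
      have hpre : (fun ω : Fin k → ℝ => ω j) ⁻¹' Set.Ioi (γ * Real.log k)
          = Set.pi Set.univ
              (Function.update (fun _ : Fin k => (Set.univ : Set ℝ)) j (Set.Ioi (γ * Real.log k))) :=
        Set.eval_preimage
      rw [hpre, hP, Measure.pi_pi]
      have hprod : ∏ i : Fin k, expTilt ν (θs k i)
            (Function.update (fun _ : Fin k => (Set.univ : Set ℝ)) j (Set.Ioi (γ * Real.log k)) i)
          = expTilt ν (θs k j) (Set.Ioi (γ * Real.log k)) := by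
        haveI := hprob k
        rw [Fintype.prod_eq_single j (fun i hij => by rw [Function.update_of_ne hij]; simp),
          Function.update_self]
      rw [hprod]
      have htail := expTilt_tail (ν := ν) (hθs k j).1 (hθs k j).2 hθ' ht (hphiθ k j) hI'
      refine htail.trans (le_of_eq ?_)
      congr 1
      have hne : θ' - θbar ≠ 0 := ne_of_gt (by linarith)
      have hexp : (θbar - θ') * (γ * Real.log k) = -(2 * Real.log k) := by
        rw [hγ]
        field_simp
        ring
      have h2 : (2:ℝ) * Real.log k = Real.log ((k:ℝ) ^ 2) := by
        rw [Real.log_pow]; push_cast; ring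
      rw [hexp, Real.exp_neg, h2, Real.exp_log (by positivity)]
      field_simp [hC]
      exact hC.symm
    -- union bound
    have hcup : {ω : Fin k → ℝ | ∀ j, ω j ≤ γ * Real.log k}ᶜ
        = ⋃ j, (fun ω : Fin k → ℝ => ω j) ⁻¹' Set.Ioi (γ * Real.log k) := by
      ext ω
      simp only [Set.mem_compl_iff, Set.mem_setOf_eq, not_forall, not_le, Set.mem_iUnion,
        Set.mem_preimage, Set.mem_Ioi]
    rw [ha]
    simp only [hcup]
    calc P k (⋃ j, (fun ω : Fin k → ℝ => ω j) ⁻¹' Set.Ioi (γ * Real.log k))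
        ≤ ∑ j : Fin k, P k ((fun ω : Fin k → ℝ => ω j) ⁻¹' Set.Ioi (γ * Real.log k)) :=
          measure_iUnion_fintype_le _ _
      _ ≤ ∑ _j : Fin k, ENNReal.ofReal (C / k ^ 2) := Finset.sum_le_sum fun j _ => hsingle j
      _ = (k : ENNReal) * ENNReal.ofReal (C / k ^ 2) := by
          rw [Finset.sum_const, Finset.card_univ, Fintype.card_fin]; ring
      _ = ENNReal.ofReal (C / k) := by
          rw [← ENNReal.ofReal_natCast k, ← ENNReal.ofReal_mul (by positivity)]
          congr 1
          field_simp
  -- limit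
  have ha0 : Tendsto a atTop (nhds 0) := by
    have hup : Tendsto (fun k : ℕ => ENNReal.ofReal (C / k)) atTop (nhds 0) := by
      have h1 : Tendsto (fun k : ℕ => C / (k:ℝ)) atTop (nhds 0) :=
        tendsto_const_div_atTop_nhds_zero_nat C
      have h2 := ENNReal.tendsto_ofReal h1
      simpa using h2
    refine tendsto_of_tendsto_of_tendsto_of_le_of_le'
      (g := fun _ : ℕ => (0 : ENNReal)) (h := fun k : ℕ => ENNReal.ofReal (C / k))
      tendsto_const_nhds hup ?_ ?_
    · filter_upwards with k using zero_le
    · filter_upwards [eventually_ge_atTop 1] with k hk using hak k hk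
  refine (tendsto_congr hsplit).mpr ?_
  have : Tendsto (fun k => (1 : ENNReal) - a k) atTop (nhds (1 - 0)) :=
    ENNReal.Tendsto.sub tendsto_const_nhds ha0 (Or.inl (by simp))
  simpa using this
end
end

section
/- Let S be a finite index set, let G be a finite group of permutations of S, and let X be an S-indexed random vector in ℝ^S whose distribution is invariant under coordinate permutation by every π ∈ G (i.e., X∘π has the same distribution as X for all π ∈ G). Let T : ℝ^S → ℝ be measurable and define the permutation p-value 𝔓(X) = #{π ∈ G : T(X∘π) ≥ T(X)}/|G|. Then for every α ∈ [0,1], P(𝔓(X) ≤ α) ≤ α. -/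
open MeasureTheory Set

/-- Validity (super-uniformity) of the permutation p-value: if the law of the
`S`-indexed data vector is invariant under coordinate permutation by every element of a
finite group `G` of permutations of `S`, then for any statistic `T`, the permutation
p-value `𝔓(X) = #{π ∈ G : T(X∘π) ≥ T(X)}/|G|` satisfies `P(𝔓(X) ≤ α) ≤ α`. -/
theorem perm_pvalue_valid (S : Type*) [Fintype S]
    (G : Subgroup (Equiv.Perm S))
    (μ : Measure (S → ℝ)) [IsProbabilityMeasure μ]
    (hinv : ∀ π ∈ G, Measure.map (fun ω : S → ℝ => fun s => ω (π s)) μ = μ)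
    (T : (S → ℝ) → ℝ) (hT : Measurable T)
    (α : ℝ) (hα0 : 0 ≤ α) (hα1 : α ≤ 1) :
    μ {ω | ({π : Equiv.Perm S | π ∈ G ∧ T ω ≤ T (fun s => ω (π s))}.ncard : ℝ) /
            ((G : Set (Equiv.Perm S)).ncard : ℝ) ≤ α}
      ≤ ENNReal.ofReal α := by
  classical
  have : Fintype (Equiv.Perm S) := Fintype.ofFinite _
  set act : Equiv.Perm S → (S → ℝ) → (S → ℝ) := fun π ω s => ω (π s) with hact
  have hactm : ∀ π : Equiv.Perm S, Measurable (act π) := fun π =>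
    measurable_pi_lambda _ (fun s => measurable_pi_apply (π s))
  have hact_mul : ∀ (σ π : Equiv.Perm S) (ω : S → ℝ),
      act π (act σ ω) = act (σ * π) ω := by
    intro σ π ω
    funext s
    simp [hact, Equiv.Perm.mul_apply]
  set Gf : Finset (Equiv.Perm S) := (G : Set (Equiv.Perm S)).toFinset with hGf
  have hmemGf : ∀ π : Equiv.Perm S, π ∈ Gf ↔ π ∈ G := fun π => Set.mem_toFinset
  set N : ℕ := Gf.card with hN
  have hNcard : (G : Set (Equiv.Perm S)).ncard = N := Set.ncard_eq_toFinset_card' _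
  have hNpos : 0 < N := Finset.card_pos.mpr ⟨1, (hmemGf 1).mpr G.one_mem⟩
  have hNR : (0:ℝ) < (N:ℝ) := by exact_mod_cast hNpos
  set c : (S → ℝ) → ℕ := fun ω => (Gf.filter (fun π => T ω ≤ T (act π ω))).card with hc
  have hevent : ∀ ω : S → ℝ,
      {π : Equiv.Perm S | π ∈ G ∧ T ω ≤ T (fun s => ω (π s))}.ncard = c ω := by
    intro ω
    have hcc : c ω = (Gf.filter (fun π => T ω ≤ T (act π ω))).card := rfl
    rw [hcc, ← Set.ncard_coe_finset]
    congr 1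
    ext π
    simp [hmemGf, hact]
  set E : Set (S → ℝ) := {ω | ((c ω : ℝ) / (N:ℝ)) ≤ α} with hE
  have hEeq : {ω : S → ℝ |
      (({π : Equiv.Perm S | π ∈ G ∧ T ω ≤ T (fun s => ω (π s))}.ncard : ℝ) /
        ((G : Set (Equiv.Perm S)).ncard : ℝ) ≤ α)} = E := by
    ext ω
    simp only [hE, Set.mem_setOf_eq, hevent ω, hNcard]
  rw [hEeq]
  -- measurability
  have hcm : Measurable fun ω => (c ω : ℝ) := by
    have heq : (fun ω => (c ω : ℝ))
        = fun ω => ∑ π ∈ Gf, if T ω ≤ T (act π ω) then (1:ℝ) else 0 := by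
      funext ω
      simp only [hc, Finset.card_filter, Nat.cast_sum, Nat.cast_ite, Nat.cast_one, Nat.cast_zero]
    rw [heq]
    refine Finset.measurable_sum _ (fun π _ => ?_)
    exact Measurable.ite (measurableSet_le hT (hT.comp (hactm π)))
      measurable_const measurable_const
  have hEm : MeasurableSet E :=
    measurableSet_le (hcm.div_const _) measurable_const
  -- invariance
  have hμE : ∀ σ ∈ Gf, μ (act σ ⁻¹' E) = μ E := by
    intro σ hσ
    conv_rhs => rw [← hinv σ ((hmemGf σ).mp hσ)]
    rw [Measure.map_apply (hactm σ) hEm]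
  -- combinatorial bound
  have comb : ∀ ω : S → ℝ, ((Gf.filter fun σ => act σ ω ∈ E).card : ℝ) ≤ α * N := by
    intro ω
    set t : Equiv.Perm S → ℝ := fun σ => T (act σ ω) with ht
    have hcomp : ∀ σ ∈ Gf, c (act σ ω) = (Gf.filter fun τ => t σ ≤ t τ).card := by
      intro σ hσ
      have hσG : σ ∈ G := (hmemGf σ).mp hσ
      rw [hc]
      refine Finset.card_bij (fun π _ => σ * π) ?_ ?_ ?_
      · intro π hπ
        rw [Finset.mem_filter] at hπ ⊢
        obtain ⟨hπG, hle⟩ := hπ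
        refine ⟨(hmemGf _).mpr (G.mul_mem hσG ((hmemGf π).mp hπG)), ?_⟩
        show T (act σ ω) ≤ T (act (σ * π) ω)
        rwa [← hact_mul σ π ω]
      · intro π₁ h₁ π₂ h₂ hmul
        exact mul_left_cancel hmul
      · intro τ hτ
        rw [Finset.mem_filter] at hτ
        obtain ⟨hτG, hle⟩ := hτ
        refine ⟨σ⁻¹ * τ, ?_, by group⟩
        rw [Finset.mem_filter]
        refine ⟨(hmemGf _).mpr (G.mul_mem (G.inv_mem hσG) ((hmemGf τ).mp hτG)), ?_⟩
        show T (act σ ω) ≤ T (act (σ⁻¹ * τ) (act σ ω))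
        rw [hact_mul, mul_inv_cancel_left]
        exact hle
    have hmemE : ∀ σ ∈ Gf, (act σ ω ∈ E ↔ ((Gf.filter fun τ => t σ ≤ t τ).card : ℝ) ≤ α * N) := by
      intro σ hσ
      rw [hE, Set.mem_setOf_eq, hcomp σ hσ, div_le_iff₀ hNR]
    set A : Finset (Equiv.Perm S) := Gf.filter (fun σ => act σ ω ∈ E) with hA
    rcases A.eq_empty_or_nonempty with hAe | hAne
    · rw [hAe]
      simp only [Finset.card_empty, Nat.cast_zero]
      positivity
    · obtain ⟨σ₀, hσ₀A, hmin⟩ := Finset.exists_min_image A t hAne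
      have hσ₀Gf : σ₀ ∈ Gf := (Finset.mem_filter.mp hσ₀A).1
      have hσ₀E : act σ₀ ω ∈ E := (Finset.mem_filter.mp hσ₀A).2
      have hsub : A ⊆ Gf.filter (fun τ => t σ₀ ≤ t τ) := by
        intro τ hτ
        rw [Finset.mem_filter]
        exact ⟨(Finset.mem_filter.mp hτ).1, hmin τ hτ⟩
      calc (A.card : ℝ) ≤ ((Gf.filter fun τ => t σ₀ ≤ t τ).card : ℝ) := by
              exact_mod_cast Finset.card_le_card hsub
        _ ≤ α * N := (hmemE σ₀ hσ₀Gf).mp hσ₀E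
  -- main chain
  have key : (N : ENNReal) * μ E ≤ ENNReal.ofReal (α * N) := by
    have h1 : (N : ENNReal) * μ E = ∑ σ ∈ Gf, μ (act σ ⁻¹' E) := by
      rw [Finset.sum_congr rfl hμE, Finset.sum_const, nsmul_eq_mul, hN]
    have h2 : ∑ σ ∈ Gf, μ (act σ ⁻¹' E)
        = ∫⁻ ω, ∑ σ ∈ Gf, (act σ ⁻¹' E).indicator (fun _ => (1:ENNReal)) ω ∂μ := by
      rw [lintegral_finset_sum]
      · exact Finset.sum_congr rfl fun σ _ =>
          (lintegral_indicator_one (hEm.preimage (hactm σ))).symm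
      · exact fun σ _ => measurable_one.indicator (hEm.preimage (hactm σ))
    have h3 : ∀ ω : S → ℝ, ∑ σ ∈ Gf, (act σ ⁻¹' E).indicator (fun _ => (1:ENNReal)) ω
        ≤ ENNReal.ofReal (α * N) := by
      intro ω
      have hsum : ∑ σ ∈ Gf, (act σ ⁻¹' E).indicator (fun _ => (1:ENNReal)) ω
          = ((Gf.filter fun σ => act σ ω ∈ E).card : ENNReal) := by
        rw [Finset.card_filter]
        push_cast
        refine Finset.sum_congr rfl fun σ _ => ?_
        simp [Set.indicator_apply, Set.mem_preimage]
      rw [hsum]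
      calc ((Gf.filter fun σ => act σ ω ∈ E).card : ENNReal)
          = ENNReal.ofReal ((Gf.filter fun σ => act σ ω ∈ E).card : ℝ) := by
            rw [ENNReal.ofReal_natCast]
        _ ≤ ENNReal.ofReal (α * N) := ENNReal.ofReal_le_ofReal (comb ω)
    calc (N : ENNReal) * μ E = ∫⁻ ω, ∑ σ ∈ Gf, (act σ ⁻¹' E).indicator (fun _ => (1:ENNReal)) ω ∂μ := by
          rw [h1, h2]
      _ ≤ ∫⁻ _x, ENNReal.ofReal (α * N) ∂μ := lintegral_mono h3
      _ = ENNReal.ofReal (α * N) := by simp [lintegral_const]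
  have hsplit : ENNReal.ofReal (α * N) = (N : ENNReal) * ENNReal.ofReal α := by
    rw [ENNReal.ofReal_mul hα0, ENNReal.ofReal_natCast, mul_comm]
  rw [hsplit] at key
  have := (ENNReal.mul_le_mul_iff_right (a := (N : ENNReal))
    (by exact_mod_cast hNpos.ne') (ENNReal.natCast_ne_top N)).mp key
  exact this
end
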